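/- arXiv:1606.01967 — 13 statements merged into one kernel-verified Lean document; each statement's English description precedes it below -/
import Mathlib

section
/- If for a uniform space X the set C_ω(X) of ω-continuous real-valued functions on X is ω^ω-dominated in ℝ^X, then X is ω-narrow. -/
open Set Filter Uniformity Cardinal
open scoped SetRel


/-- A map `f : X → M` from a uniform space to a pseudometric space is ω-continuous
if for every `ε > 0` there is a countable family `𝒱` of entourages of `X` such that
every `x ∈ X` admits `V ∈ 𝒱` with `dist (f y) (f x) < ε` for all `y ∈ V[x]`. -/
def OmegaContinuous {X : Type*} [UniformSpace X] {M : Type*} [PseudoMetricSpace M]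
    (f : X → M) : Prop :=
  ∀ ε : ℝ, 0 < ε → ∃ 𝒱 : Set (Set (X × X)), 𝒱.Countable ∧ (∀ V ∈ 𝒱, V ∈ uniformity X) ∧
    ∀ x : X, ∃ V ∈ 𝒱, ∀ y : X, (x, y) ∈ V → dist (f y) (f x) < ε


private lemma exists_ge_of_injective (v : ℕ → ℕ) (hv : Function.Injective v) (B : ℕ) :
    ∃ n, B ≤ v n := by
  by_contra h
  push_neg at h
  obtain ⟨a, b, hab, he⟩ :=
    Finite.exists_ne_map_eq_of_infinite (fun n : ℕ => (⟨v n, h n⟩ : Fin B))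
  exact hab (hv (by simpa using congrArg Fin.val he))

private lemma omega_combinatorial {ι : Type*} [LinearOrder ι]
    (hbig : ¬ (Set.univ : Set ι).Countable)
    (hsmall : ∀ ξ : ι, (Set.Iio ξ).Countable)
    (g : (ℕ → ℕ) → ι → ℝ) (hmono : Monotone g)
    (hdom : ∀ H : ι → ℕ, ∃ α : ℕ → ℕ, ∀ ξ, (H ξ : ℝ) ≤ g α ξ) : False := by
  classical
  -- injections from initial segments to ℕ
  have he' : ∀ ξ : ι, ∃ e : (Set.Iio ξ) → ℕ, Function.Injective e := by
    intro ξ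
    have := (hsmall ξ).to_subtype
    exact Set.countable_iff_exists_injective.1 (hsmall ξ)
  choose e he using he'
  set H : ι → ι → ℕ := fun η ξ => if hlt : η < ξ then e ξ ⟨η, hlt⟩ else 0 with hH
  choose α hα using fun η => hdom (H η)
  -- unbounded above countable sequences
  have hbound : ∀ s : ℕ → ι, ∃ ξ : ι, ∀ n, s n < ξ := by
    intro s
    by_contra hcon
    push_neg at hcon
    apply hbig
    have hsub : (Set.univ : Set ι) ⊆ ⋃ n, Set.Iic (s n) := by
      intro ξ _
      obtain ⟨n, hn⟩ := hcon ξ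
      exact Set.mem_iUnion.2 ⟨n, hn⟩
    refine Set.Countable.mono hsub (Set.countable_iUnion fun n => ?_)
    rw [← Set.Iio_insert]
    exact (hsmall (s n)).insert _
  -- pigeonhole chain
  have key : ∀ (n : ℕ) (s : Set ι), ¬ s.Countable →
      ∃ k : ℕ, ¬ {η | η ∈ s ∧ α η n = k}.Countable := by
    intro n s hs
    by_contra hcon
    push_neg at hcon
    apply hs
    have : s ⊆ ⋃ k : ℕ, {η | η ∈ s ∧ α η n = k} := by
      intro η hη
      exact Set.mem_iUnion.2 ⟨α η n, hη, rfl⟩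
    exact Set.Countable.mono this (Set.countable_iUnion hcon)
  let step : ℕ → {s : Set ι // ¬ s.Countable} → {s : Set ι // ¬ s.Countable} :=
    fun n s => ⟨{η | η ∈ s.1 ∧ α η n = (key n s.1 s.2).choose}, (key n s.1 s.2).choose_spec⟩
  let T : ℕ → {s : Set ι // ¬ s.Countable} := fun n => Nat.rec ⟨Set.univ, hbig⟩ step n
  have hTsucc : ∀ n, T (n + 1) = step n (T n) := fun _ => rfl
  have hTsub : ∀ n, (T (n + 1)).1 ⊆ (T n).1 := by
    intro n a ha
    rw [hTsucc] at ha
    exact ha.1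
  have hTconst : ∀ n a b, a ∈ (T (n + 1)).1 → b ∈ (T (n + 1)).1 → α a n = α b n := by
    intro n a b ha hb
    rw [hTsucc] at ha hb
    exact ha.2.trans hb.2.symm
  have hTmono : ∀ m n : ℕ, m ≤ n → (T n).1 ⊆ (T m).1 := by
    intro m n hmn
    induction n with
    | zero =>
      have : m = 0 := Nat.le_zero.1 hmn
      subst this; exact fun _ h => h
    | succ n ih =>
      rcases Nat.le_succ_iff.1 hmn with h | h
      · exact fun a ha => ih h (hTsub n ha)
      · subst h; exact fun _ h => h
  -- choose distinct elements
  have pick : ∀ (n : ℕ) (l : List ι), ∃ a, a ∈ (T (n + 1)).1 ∧ a ∉ l := by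
    intro n l
    by_contra hcon
    push_neg at hcon
    exact (T (n + 1)).2 (Set.Countable.mono (fun a ha => by
      by_contra hal
      exact hal (hcon a ha)) (List.finite_toSet l).countable)
  choose pk hpk1 hpk2 using pick
  let L : ℕ → List ι := fun n => Nat.rec [] (fun n l => pk n l :: l) n
  let η : ℕ → ι := fun n => pk n (L n)
  have hLsucc : ∀ n, L (n + 1) = η n :: L n := fun _ => rfl
  have hηT : ∀ n, η n ∈ (T (n + 1)).1 := fun n => hpk1 n (L n)
  have hηL : ∀ n, η n ∉ L n := fun n => hpk2 n (L n)
  have hmemL : ∀ m n : ℕ, m < n → η m ∈ L n := by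
    intro m n
    induction n with
    | zero => omega
    | succ n ih =>
      intro hmn
      rw [hLsucc]
      rcases Nat.lt_succ_iff_lt_or_eq.1 hmn with h | h
      · exact List.mem_cons_of_mem _ (ih h)
      · subst h; exact List.mem_cons_self
  have hηinj : Function.Injective η := by
    intro a b hab
    by_contra hne
    rcases lt_or_gt_of_ne hne with h | h
    · exact hηL b (hab ▸ hmemL a b h)
    · exact hηL a (hab ▸ hmemL b a h)
  -- bound the witnesses
  let β : ℕ → ℕ := fun j => Finset.sup (Finset.range (j + 1)) (fun m => α (η m) j)
  have hβ : ∀ n, α (η n) ≤ β := by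
    intro n j
    by_cases hnj : n ≤ j
    · exact Finset.le_sup (s := Finset.range (j + 1)) (f := fun m => α (η m) j)
        (Finset.mem_range.2 (by omega))
    · have h1 : η n ∈ (T (j + 1)).1 := hTmono (j + 1) (n + 1) (by omega) (hηT n)
      have h2 := hTconst j (η n) (η j) h1 (hηT j)
      rw [show α (η n) j = α (η j) j from h2]
      exact Finset.le_sup (s := Finset.range (j + 1)) (f := fun m => α (η m) j)
        (Finset.mem_range.2 (by omega))
  -- the diagonal point
  obtain ⟨ξs, hξs⟩ := hbound η
  let v : ℕ → ℕ := fun n => H (η n) ξs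
  have hvinj : Function.Injective v := by
    intro a b hab
    have ha : η a < ξs := hξs a
    have hb : η b < ξs := hξs b
    simp only [v, hH, dif_pos ha, dif_pos hb] at hab
    have := he ξs hab
    exact hηinj (congrArg Subtype.val this)
  have hle : ∀ n, (v n : ℝ) ≤ g β ξs := by
    intro n
    calc (v n : ℝ) ≤ g (α (η n)) ξs := hα (η n) ξs
    _ ≤ g β ξs := hmono (hβ n) ξs
  obtain ⟨n, hn⟩ := exists_ge_of_injective v hvinj (⌈g β ξs⌉₊ + 1)
  have h1 : (v n : ℝ) ≤ (⌈g β ξs⌉₊ : ℝ) := (hle n).trans (Nat.le_ceil _)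
  have h2 : ((⌈g β ξs⌉₊ + 1 : ℕ) : ℝ) ≤ (v n : ℝ) := Nat.cast_le.2 hn
  push_cast at h2
  linarith


private lemma exists_pseudometric {X : Type*} [uX : UniformSpace X] {U : Set (X × X)}
    (hU : U ∈ 𝓤 X) :
    ∃ d : X → X → ℝ, (∀ x, d x x = 0) ∧ (∀ x y, d x y = d y x) ∧
      (∀ x y z, d x z ≤ d x y + d y z) ∧
      (∀ ε : ℝ, 0 < ε → {p : X × X | d p.1 p.2 < ε} ∈ 𝓤 X) ∧
      ∃ r : ℝ, 0 < r ∧ ∀ x y, d x y < r → (x, y) ∈ U := by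
  classical
  -- a decreasing chain of symmetric entourages
  have step : ∀ s : Set (X × X), s ∈ 𝓤 X →
      ∃ t, (t ∈ 𝓤 X ∧ SetRel.IsSymm t) ∧ t ○ t ⊆ s := by
    intro s hs
    obtain ⟨t, ht, hsymm, hcomp⟩ := comp_symm_mem_uniformity_sets hs
    exact ⟨t, ⟨ht, hsymm⟩, hcomp⟩
  choose nxt hnxt hcomp using step
  let V : ℕ → {t : Set (X × X) // t ∈ 𝓤 X ∧ SetRel.IsSymm t} :=
    fun n => Nat.rec ⟨nxt U hU, hnxt U hU⟩ (fun _ p => ⟨nxt p.1 p.2.1, hnxt p.1 p.2.1⟩) n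
  have hVsucc : ∀ n, (V (n + 1)).1 = nxt (V n).1 (V n).2.1 := fun _ => rfl
  have hVcomp : ∀ n, (V (n + 1)).1 ○ (V (n + 1)).1 ⊆ (V n).1 := by
    intro n
    rw [hVsucc]
    exact hcomp (V n).1 (V n).2.1
  have hVrefl : ∀ n (a : X), (a, a) ∈ (V n).1 := fun n a => refl_mem_uniformity (V n).2.1
  have hVsub : ∀ n, (V (n + 1)).1 ⊆ (V n).1 := by
    intro n p hp
    exact hVcomp n ⟨p.2, hp, hVrefl (n + 1) p.2⟩
  have hVanti : Antitone fun n => (V n).1 := antitone_nat_of_succ_le hVsub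
  have hV0U : (V 0).1 ⊆ U := by
    intro p hp
    exact hcomp U hU ⟨p.2, hp, hVrefl 0 p.2⟩
  -- the coarser countably generated uniformity
  let F : Filter (X × X) := ⨅ n, 𝓟 (V n).1
  have hdir : Directed (· ≥ ·) fun n => 𝓟 (V n).1 := fun m n =>
    ⟨max m n, principal_mono.2 (hVanti (le_max_left m n)),
      principal_mono.2 (hVanti (le_max_right m n))⟩
  have hmemF : ∀ s : Set (X × X), s ∈ F ↔ ∃ n, (V n).1 ⊆ s := by
    intro s
    rw [mem_iInf_of_directed hdir]
    simp [mem_principal]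
  have hFle : ∀ s, s ∈ F → s ∈ 𝓤 X := by
    intro s hs
    obtain ⟨n, hn⟩ := (hmemF s).1 hs
    exact mem_of_superset (V n).2.1 hn
  let core : UniformSpace.Core X := UniformSpace.Core.mk' F
    (fun r hr x => by
      obtain ⟨n, hn⟩ := (hmemF r).1 hr
      exact hn (hVrefl n x))
    (fun r hr => by
      obtain ⟨n, hn⟩ := (hmemF r).1 hr
      refine (hmemF _).2 ⟨n, ?_⟩
      intro p hp
      have : (p.2, p.1) ∈ (V n).1 := (V n).2.2.symm p.1 p.2 hp
      exact hn this)
    (fun r hr => by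
      obtain ⟨n, hn⟩ := (hmemF r).1 hr
      exact ⟨(V (n + 1)).1, (hmemF _).2 ⟨n + 1, fun _ h => h⟩,
        Set.Subset.trans (hVcomp n) hn⟩)
  have hcg : (@uniformity X (UniformSpace.ofCore core)).IsCountablyGenerated := by
    have h : @uniformity X (UniformSpace.ofCore core) = F := rfl
    rw [h]
    exact Filter.isCountablyGenerated_seq _
  obtain ⟨m, hm⟩ := @UniformSpace.metrizable_uniformity X (UniformSpace.ofCore core) hcg
  set d : X → X → ℝ := @dist X (@PseudoMetricSpace.toDist X m) with hd
  have hmu : @uniformity X (@PseudoMetricSpace.toUniformSpace X m) = F := by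
    rw [hm]; rfl
  have hball : ∀ ε : ℝ, 0 < ε → {p : X × X | d p.1 p.2 < ε} ∈ @uniformity X uX := by
    intro ε hε
    apply hFle
    rw [← hmu]
    exact @Metric.dist_mem_uniformity X m ε hε
  have hV0 : (V 0).1 ∈ @uniformity X (@PseudoMetricSpace.toUniformSpace X m) := by
    rw [hmu]
    exact (hmemF _).2 ⟨0, fun _ h => h⟩
  obtain ⟨r, hr, hrsub⟩ := (@Metric.mem_uniformity_dist X m (V 0).1).1 hV0
  refine ⟨d, fun x => @dist_self X m x, fun x y => @dist_comm X m x y,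
    fun x y z => @dist_triangle X m x y z, hball, r, hr, fun x y hxy => ?_⟩
  exact hV0U (hrsub hxy)


private lemma exists_maximal_separated {X : Type*} (d : X → X → ℝ)
    (dself : ∀ x, d x x = 0) (dsymm : ∀ x y, d x y = d y x) {r : ℝ} (hr : 0 < r) :
    ∃ S : Set X, (∀ a ∈ S, ∀ b ∈ S, a ≠ b → r ≤ d a b) ∧
      ∀ y : X, ∃ s ∈ S, d s y < r := by
  obtain ⟨S, hS⟩ := zorn_subset
    {S : Set X | ∀ a ∈ S, ∀ b ∈ S, a ≠ b → r ≤ d a b} (by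
      intro c hc hchain
      refine ⟨⋃₀ c, ?_, fun s hs => Set.subset_sUnion_of_mem hs⟩
      intro a ha b hb hne
      obtain ⟨s, hs, has⟩ := ha
      obtain ⟨t, ht, hbt⟩ := hb
      rcases hchain.total hs ht with h | h
      · exact hc ht a (h has) b hbt hne
      · exact hc hs a has b (h hbt) hne)
  refine ⟨S, hS.prop, ?_⟩
  intro y
  by_contra hcon
  push_neg at hcon
  have hymem : y ∉ S := fun hy => by
    have := hcon y hy
    rw [dself] at this
    linarith
  have hins : insert y S ∈ {S : Set X | ∀ a ∈ S, ∀ b ∈ S, a ≠ b → r ≤ d a b} := by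
    intro a ha b hb hne
    rcases ha with rfl | ha
    · rcases hb with rfl | hb
      · exact absurd rfl hne
      · rw [dsymm]
        exact hcon b hb
    · rcases hb with rfl | hb
      · exact hcon a ha
      · exact hS.prop a ha b hb hne
  have := hS.eq_of_subset hins (Set.subset_insert y S)
  exact hymem (this ▸ Set.mem_insert y S)


private lemma bump_omegaContinuous {X : Type*} [uX : UniformSpace X] {ι : Type*}
    (d : X → X → ℝ) (dself : ∀ x, d x x = 0) (dsymm : ∀ x y, d x y = d y x)
    (dtri : ∀ x y z, d x z ≤ d x y + d y z)
    (dball : ∀ ε : ℝ, 0 < ε → {p : X × X | d p.1 p.2 < ε} ∈ 𝓤 X)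
    {r : ℝ} (hr : 0 < r) (x : ι → X)
    (hsep : ∀ ξ η, ξ ≠ η → r ≤ d (x ξ) (x η)) (H : ι → ℕ) :
    ∃ F : X → ℝ, OmegaContinuous F ∧ ∀ ξ, F (x ξ) = H ξ := by
  classical
  have h4r : (0:ℝ) < 4 / r := by positivity
  have hinv : 4 / r * (r / 4) = 1 := by field_simp
  let F : X → ℝ := fun y =>
    if h : ∃ ξ, d (x ξ) y < r / 4 then (H h.choose : ℝ) * (1 - 4 / r * d (x h.choose) y) else 0
  have huniq : ∀ ξ η y, d (x ξ) y < 3 * r / 4 → d (x η) y < r / 4 → ξ = η := by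
    intro ξ η y h1 h2
    by_contra hne
    have hs := hsep ξ η hne
    have h3 : d (x ξ) (x η) ≤ d (x ξ) y + d y (x η) := dtri _ _ _
    rw [dsymm y (x η)] at h3
    linarith
  have hF : ∀ ξ y, d (x ξ) y < 3 * r / 4 →
      F y = (H ξ : ℝ) * max (1 - 4 / r * d (x ξ) y) 0 := by
    intro ξ y hξ
    by_cases h : ∃ η, d (x η) y < r / 4
    · have heq : h.choose = ξ := (huniq ξ h.choose y hξ h.choose_spec).symm
      have h1 : F y = (H h.choose : ℝ) * (1 - 4 / r * d (x h.choose) y) := dif_pos h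
      rw [h1, heq]
      have hlt : d (x ξ) y < r / 4 := heq ▸ h.choose_spec
      have hm : 4 / r * d (x ξ) y < 1 := by
        calc 4 / r * d (x ξ) y < 4 / r * (r / 4) := by
              exact mul_lt_mul_of_pos_left hlt h4r
          _ = 1 := hinv
      rw [max_eq_left (by linarith)]
    · have h1 : F y = 0 := dif_neg h
      have hge : r / 4 ≤ d (x ξ) y := not_lt.1 fun hc => h ⟨ξ, hc⟩
      have hm : 1 ≤ 4 / r * d (x ξ) y := by
        calc (1:ℝ) = 4 / r * (r / 4) := hinv.symm
          _ ≤ 4 / r * d (x ξ) y := mul_le_mul_of_nonneg_left hge h4r.le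
      rw [h1, max_eq_right (by linarith), mul_zero]
  have hval : ∀ ξ, F (x ξ) = H ξ := by
    intro ξ
    have h0 : d (x ξ) (x ξ) = 0 := dself _
    have := hF ξ (x ξ) (by rw [h0]; positivity)
    rw [this, h0]
    norm_num
  refine ⟨F, ?_, hval⟩
  intro ε hε
  refine ⟨Set.range (fun M : ℕ =>
      {p : X × X | d p.1 p.2 < min (ε * r / (4 * (M + 1))) (r / 4)}),
    Set.countable_range _, ?_, ?_⟩
  · rintro V ⟨M, rfl⟩
    exact dball _ (lt_min (by positivity) (by positivity))
  · intro y
    by_cases hy : ∃ ξ, d (x ξ) y < r / 2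
    · obtain ⟨ξ, hξy⟩ := hy
      set M := H ξ with hM
      refine ⟨_, ⟨M, rfl⟩, ?_⟩
      intro z hz
      simp only [Set.mem_setOf_eq] at hz
      have hz1 : d y z < ε * r / (4 * (M + 1)) := lt_of_lt_of_le hz (min_le_left _ _)
      have hz2 : d y z < r / 4 := lt_of_lt_of_le hz (min_le_right _ _)
      have hdz : d (x ξ) z < 3 * r / 4 := lt_of_le_of_lt (dtri _ y _) (by linarith)
      have hFy := hF ξ y (by linarith)
      have hFz := hF ξ z hdz
      rw [Real.dist_eq, hFy, hFz]
      have habs : |d (x ξ) z - d (x ξ) y| ≤ d y z := by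
        rw [abs_le]
        constructor
        · have h5 : d (x ξ) y ≤ d (x ξ) z + d z y := dtri _ _ _
          rw [dsymm z y] at h5
          linarith
        · linarith [dtri (x ξ) y z]
      have key : |(M:ℝ) * max (1 - 4 / r * d (x ξ) z) 0 - (M:ℝ) * max (1 - 4 / r * d (x ξ) y) 0|
          ≤ (M:ℝ) * (4 / r) * d y z := by
        calc |(M:ℝ) * max (1 - 4 / r * d (x ξ) z) 0 - (M:ℝ) * max (1 - 4 / r * d (x ξ) y) 0|
            = (M:ℝ) * |max (1 - 4 / r * d (x ξ) z) 0 - max (1 - 4 / r * d (x ξ) y) 0| := by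
              rw [← mul_sub, abs_mul, Nat.abs_cast]
          _ ≤ (M:ℝ) * |(1 - 4 / r * d (x ξ) z) - (1 - 4 / r * d (x ξ) y)| :=
              mul_le_mul_of_nonneg_left (abs_max_sub_max_le_abs _ _ _) (Nat.cast_nonneg M)
          _ = (M:ℝ) * ((4 / r) * |d (x ξ) z - d (x ξ) y|) := by
              rw [show (1 - 4 / r * d (x ξ) z) - (1 - 4 / r * d (x ξ) y)
                  = (4 / r) * (d (x ξ) y - d (x ξ) z) by ring, abs_mul,
                abs_of_pos h4r, abs_sub_comm]
          _ ≤ (M:ℝ) * ((4 / r) * d y z) :=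
              mul_le_mul_of_nonneg_left
                (mul_le_mul_of_nonneg_left habs h4r.le) (Nat.cast_nonneg M)
          _ = (M:ℝ) * (4 / r) * d y z := by ring
      have hfin : (M:ℝ) * (4 / r) * d y z < ε := by
        have hb : (M:ℝ) * (4 / r) * d y z ≤ (M:ℝ) * (4 / r) * (ε * r / (4 * (M + 1))) :=
          mul_le_mul_of_nonneg_left hz1.le (by positivity)
        have heq2 : (M:ℝ) * (4 / r) * (ε * r / (4 * (M + 1))) = ε * ((M:ℝ) / (M + 1)) := by
          field_simp
        have hlt1 : (M:ℝ) / (M + 1) < 1 := by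
          rw [div_lt_one (by positivity)]
          linarith
        calc (M:ℝ) * (4 / r) * d y z ≤ ε * ((M:ℝ) / (M + 1)) := heq2 ▸ hb
          _ < ε := mul_lt_of_lt_one_right hε hlt1
      exact lt_of_le_of_lt key hfin
    · refine ⟨_, ⟨0, rfl⟩, ?_⟩
      intro z hz
      simp only [Set.mem_setOf_eq] at hz
      have hz2 : d y z < r / 4 := lt_of_lt_of_le hz (min_le_right _ _)
      have hFy : F y = 0 := dif_neg fun ⟨ξ, hξ⟩ => hy ⟨ξ, by linarith⟩
      have hFz : F z = 0 := dif_neg fun ⟨ξ, hξ⟩ => hy ⟨ξ, by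
        have h5 : d (x ξ) y ≤ d (x ξ) z + d z y := dtri _ _ _
        rw [dsymm z y] at h5
        linarith⟩
      rw [hFz, hFy, Real.dist_eq, sub_zero, abs_zero]
      exact hε

/-- If the set `C_ω(X)` of ω-continuous real functions on a uniform space `X` is
`ω^ω`-dominated in `ℝ^X`, then `X` is ω-narrow: for every entourage `U` there is a
countable set `C ⊆ X` with `X = ⋃_{c ∈ C} U[c]`. -/
theorem omegaNarrow_of_omegaContinuous_dominated
    {X : Type*} [UniformSpace X]
    (hdom : ∃ φ : (ℕ → ℕ) → (X → ℝ), Monotone φ ∧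
      ∀ f : X → ℝ, OmegaContinuous f → ∃ α : ℕ → ℕ, f ≤ φ α) :
    ∀ U ∈ uniformity X, ∃ C : Set X, C.Countable ∧ ∀ x : X, ∃ c ∈ C, (c, x) ∈ U := by
  classical
  obtain ⟨φ, hφmono, hφdom⟩ := hdom
  intro U hU
  obtain ⟨d, dself, dsymm, dtri, dball, r, hr, hrU⟩ := exists_pseudometric hU
  obtain ⟨S, hSsep, hScov⟩ := exists_maximal_separated d dself dsymm hr
  by_cases hc : S.Countable
  · exact ⟨S, hc, fun y => by
      obtain ⟨s, hs, hlt⟩ := hScov y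
      exact ⟨s, hs, hrU s y hlt⟩⟩
  · exfalso
    have hbig : ¬ (Set.univ : Set ((Cardinal.aleph 1).ord.ToType)).Countable := by
      rw [Set.countable_univ_iff]
      intro h
      have h1 : #((Cardinal.aleph 1).ord.ToType) ≤ Cardinal.aleph0 := Cardinal.mk_le_aleph0
      rw [Cardinal.mk_toType, Cardinal.card_ord] at h1
      exact absurd (lt_of_lt_of_le Cardinal.aleph0_lt_aleph_one h1) (lt_irrefl _)
    have hsmall : ∀ ξ : (Cardinal.aleph 1).ord.ToType, (Set.Iio ξ).Countable := fun ξ =>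
      (Cardinal.countable_iff_lt_aleph_one _).2 (Cardinal.mk_Iio_ord_toType ξ)
    have hSle : #((Cardinal.aleph 1).ord.ToType) ≤ #↥S := by
      rw [Cardinal.mk_toType, Cardinal.card_ord]
      exact not_lt.1 fun h => hc ((Cardinal.countable_iff_lt_aleph_one S).2 h)
    obtain ⟨f⟩ := (Cardinal.le_def _ _).1 hSle
    let x : (Cardinal.aleph 1).ord.ToType → X := fun ξ => (f ξ : X)
    have hsep : ∀ ξ η : (Cardinal.aleph 1).ord.ToType, ξ ≠ η → r ≤ d (x ξ) (x η) := by
      intro ξ η hne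
      refine hSsep _ (f ξ).2 _ (f η).2 ?_
      intro he
      exact hne (f.injective (Subtype.ext he))
    refine omega_combinatorial hbig hsmall (fun α ξ => φ α (x ξ)) ?_ ?_
    · intro a b hab ξ
      exact hφmono hab (x ξ)
    · intro Hh
      obtain ⟨F, hFω, hFval⟩ := bump_omegaContinuous d dself dsymm dtri dball hr x hsep Hh
      obtain ⟨α, hα⟩ := hφdom F hFω
      exact ⟨α, fun ξ => by rw [← hFval ξ]; exact hα (x ξ)⟩
end

section
/- Assume ω₁ < 𝔟, i.e., every subset B ⊆ ω^ω of cardinality at most ℵ₁ is dominated by a countable set: there exists a countable C ⊆ ω^ω such that every f ∈ B satisfies f ≤ g for some g ∈ C. If X is a uniform space whose uniformity is ω-narrow and has a 𝔊-base, then the topological space X (with the topology induced by the uniformity) is weakly cosmic, that is, X contains no uncountable weakly separated subset. -/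
/-- A subset `S` of a topological space is weakly separated if every `x ∈ S` has an open
neighborhood `O x` such that for distinct `x, y ∈ S` either `x ∉ O y` or `y ∉ O x`. -/
def WeaklySeparated {X : Type*} [TopologicalSpace X] (S : Set X) : Prop :=
  ∃ O : X → Set X, (∀ x ∈ S, IsOpen (O x) ∧ x ∈ O x) ∧
    ∀ x ∈ S, ∀ y ∈ S, x ≠ y → x ∉ O y ∨ y ∉ O x

/-- A topological space is weakly cosmic if it has no uncountable weakly separated subset. -/
def WeaklyCosmic (X : Type*) [TopologicalSpace X] : Prop :=
  ∀ S : Set X, WeaklySeparated S → S.Countable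

/-- Assume `ω₁ < 𝔟`. If the uniformity of a uniform space `X` is ω-narrow and has a
`𝔊`-base, then `X` is weakly cosmic. -/
theorem weaklyCosmic_of_omegaNarrow_gBase
    {X : Type*} [UniformSpace X]
    (hb : ∀ B : Set (ℕ → ℕ), Cardinal.mk ↥B ≤ Cardinal.aleph 1 →
      ∃ C : Set (ℕ → ℕ), C.Countable ∧ ∀ f ∈ B, ∃ g ∈ C, f ≤ g)
    (hnarrow : ∀ U ∈ uniformity X, ∃ C : Set X, C.Countable ∧ ∀ x : X, ∃ c ∈ C, (c, x) ∈ U)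
    (hG : ∃ U : (ℕ → ℕ) → Set (X × X), (∀ α, U α ∈ uniformity X) ∧
      (∀ V ∈ uniformity X, ∃ α, U α ⊆ V) ∧ ∀ α β : ℕ → ℕ, α ≤ β → U β ⊆ U α) :
    WeaklyCosmic X := by
  classical
  obtain ⟨U, hUmem, hUbase, hUmono⟩ := hG
  rintro S ⟨O, hO, hsep⟩
  by_contra hS
  -- For each x ∈ S choose α with U α [x] ⊆ O x
  have key : ∀ x ∈ S, ∃ α : ℕ → ℕ, ∀ y : X, (x, y) ∈ U α → y ∈ O x := by
    intro x hx
    have hnhds : O x ∈ nhds x := (hO x hx).1.mem_nhds (hO x hx).2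
    rw [UniformSpace.mem_nhds_iff] at hnhds
    obtain ⟨V, hV, hVsub⟩ := hnhds
    obtain ⟨α, hα⟩ := hUbase V hV
    exact ⟨α, fun y hy => hVsub (hα hy)⟩
  choose! A hA using key
  -- take a subset of S of cardinality ℵ₁
  have h1 : Cardinal.aleph 1 ≤ Cardinal.mk S := by
    by_contra h
    exact hS ((Cardinal.countable_iff_lt_aleph_one S).2 (lt_of_not_ge h))
  obtain ⟨S', hS'sub, hS'card⟩ := Cardinal.le_mk_iff_exists_subset.1 h1
  have hS'unc : ¬ S'.Countable := by
    rw [Cardinal.countable_iff_lt_aleph_one, hS'card]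
    exact lt_irrefl _
  -- dominate the images
  have himg : Cardinal.mk ↥(A '' S') ≤ Cardinal.aleph 1 := by
    have h2 := Cardinal.mk_image_le_lift (f := A) (s := S')
    rw [hS'card] at h2
    simpa using h2
  obtain ⟨C, hCcount, hCdom⟩ := hb (A '' S') himg
  -- some piece uncountable
  have hcover : S' ⊆ ⋃ g ∈ C, {x ∈ S' | A x ≤ g} := by
    intro x hx
    obtain ⟨g, hg, hle⟩ := hCdom (A x) ⟨x, hx, rfl⟩
    exact Set.mem_biUnion hg ⟨hx, hle⟩
  have : ∃ g ∈ C, ¬ {x ∈ S' | A x ≤ g}.Countable := by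
    by_contra h
    push_neg at h
    exact hS'unc ((hCcount.biUnion h).mono hcover)
  obtain ⟨g, -, hTunc⟩ := this
  set T := {x ∈ S' | A x ≤ g} with hT
  -- symmetric V with V ○ V ⊆ U g
  obtain ⟨V, hV, hVsymm, hVcomp⟩ := comp_symm_mem_uniformity_sets (hUmem g)
  obtain ⟨C', hC'count, hC'cov⟩ := hnarrow V hV
  have hcover2 : T ⊆ ⋃ c ∈ C', {x ∈ T | (c, x) ∈ V} := by
    intro x hx
    obtain ⟨c, hc, hcx⟩ := hC'cov x
    exact Set.mem_biUnion hc ⟨hx, hcx⟩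
  have : ∃ c ∈ C', ¬ {x ∈ T | (c, x) ∈ V}.Countable := by
    by_contra h
    push_neg at h
    exact hTunc ((hC'count.biUnion h).mono hcover2)
  obtain ⟨c, -, hPunc⟩ := this
  have hnt : {x ∈ T | (c, x) ∈ V}.Nontrivial := by
    rw [← Set.not_subsingleton_iff]
    exact fun h => hPunc h.countable
  obtain ⟨x, ⟨⟨hxS', hxg⟩, hcx⟩, y, ⟨⟨hyS', hyg⟩, hcy⟩, hxy⟩ := hnt
  have hxg' : (x, y) ∈ U g := hVcomp ⟨c, hVsymm.symm _ _ hcx, hcy⟩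
  have hyg' : (y, x) ∈ U g := hVcomp ⟨c, hVsymm.symm _ _ hcy, hcx⟩
  have hxS : x ∈ S := hS'sub hxS'
  have hyS : y ∈ S := hS'sub hyS'
  have hyOx : y ∈ O x := hA x hxS y (hUmono _ _ hxg hxg')
  have hxOy : x ∈ O y := hA y hyS x (hUmono _ _ hyg hyg')
  rcases hsep x hxS y hyS hxy with h | h
  · exact h hxOy
  · exact h hyOx
end

section
/- If the uniformity of a uniform space X has a 𝔊-base, then the product uniformity on the countable power X^ω = ∏_{n∈ω} X also has a 𝔊-base. -/
/-- A uniform space has a `𝔊`-base if there is a base `(U_α)_{α ∈ ω^ω}` of its uniformity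
such that `U_β ⊆ U_α` whenever `α ≤ β` in `ω^ω`. -/
def HasGBase (X : Type*) [UniformSpace X] : Prop :=
  ∃ U : (ℕ → ℕ) → Set (X × X), (∀ α, U α ∈ uniformity X) ∧
    (∀ V ∈ uniformity X, ∃ α, U α ⊆ V) ∧ ∀ α β : ℕ → ℕ, α ≤ β → U β ⊆ U α

/-- If the uniformity of a uniform space `X` has a `𝔊`-base, then the product uniformity
on the countable power `X^ω` has a `𝔊`-base as well. -/
theorem hasGBase_pi_of_hasGBase {X : Type*} [UniformSpace X] (h : HasGBase X) :
    HasGBase (ℕ → X) := by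
  classical
  obtain ⟨U, hU1, hU2, hU3⟩ := h
  -- encoding: index 0 stores the cutoff; index `Nat.pair n m + 1` stores the value
  -- of the `n`-th coordinate function at `m`.
  set V : (ℕ → ℕ) → Set ((ℕ → X) × (ℕ → X)) :=
    fun α => {p | ∀ n ≤ α 0, (p.1 n, p.2 n) ∈ U (fun m => α (Nat.pair n m + 1))} with hV
  refine ⟨V, ?_, ?_, ?_⟩
  · intro α
    have : V α = ⋂ n ∈ Finset.range (α 0 + 1),
        (fun p : (ℕ → X) × (ℕ → X) => (p.1 n, p.2 n)) ⁻¹' U (fun m => α (Nat.pair n m + 1)) := by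
      ext p
      simp [hV, Nat.lt_succ_iff]
    rw [this]
    refine (Filter.biInter_finset_mem _).2 fun n _ => ?_
    exact (Pi.uniformContinuous_proj (fun _ : ℕ => X) n) (hU1 _)
  · intro W hW
    rw [Pi.uniformity] at hW
    obtain ⟨I, hI, S, hS, -, hWI, -⟩ := Filter.mem_iInf'.1 hW
    -- for each n, get an entourage T n with preimage inside S n
    have hT : ∀ n, ∃ T ∈ uniformity X,
        (fun p : (ℕ → X) × (ℕ → X) => (p.1 n, p.2 n)) ⁻¹' T ⊆ S n := fun n =>
      Filter.mem_comap.1 (hS n)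
    choose T hTm hTs using hT
    choose γ hγ using fun n => hU2 (T n) (hTm n)
    obtain ⟨N, hN⟩ : ∃ N, ∀ n ∈ I, n ≤ N := by
      rcases hI.bddAbove with ⟨N, hN⟩
      exact ⟨N, fun n hn => hN hn⟩
    refine ⟨fun k => if k = 0 then N else γ (Nat.unpair (k - 1)).1 (Nat.unpair (k - 1)).2,
      fun p hp => ?_⟩
    rw [hWI]
    refine Set.mem_iInter₂.2 fun n hn => ?_
    have h0 : (if (0 : ℕ) = 0 then N else γ (Nat.unpair (0 - 1)).1 (Nat.unpair (0 - 1)).2) = N := by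
      simp
    have hpn := hp n (by rw [h0] at *; exact hN n hn)
    have heq : (fun m => if Nat.pair n m + 1 = 0 then N
        else γ (Nat.unpair (Nat.pair n m + 1 - 1)).1 (Nat.unpair (Nat.pair n m + 1 - 1)).2)
        = γ n := by
      funext m
      simp [Nat.unpair_pair]
    rw [heq] at hpn
    exact hTs n (hγ n hpn)
  · intro α β hab p hp n hn
    have h0 : n ≤ β 0 := le_trans hn (hab 0)
    exact hU3 _ _ (fun m => hab _) (hp n h0)
end

section
/- Assume ω₁ < 𝔟, i.e., every subset B ⊆ ω^ω of cardinality at most ℵ₁ is dominated by a countable set: there exists a countable C ⊆ ω^ω such that every f ∈ B satisfies f ≤ g for some g ∈ C. If X is a uniform space whose uniformity is ω-narrow and has a 𝔊-base, then the countable power X^ω (with the product topology) is weakly cosmic. -/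
/-- Assume `ω₁ < 𝔟`. If the uniformity of a uniform space `X` is ω-narrow and has a
`𝔊`-base, then the countable power `X^ω` (with the product topology) is weakly cosmic. -/
theorem weaklyCosmic_pi_of_omegaNarrow_gBase
    {X : Type*} [UniformSpace X]
    (hb : ∀ B : Set (ℕ → ℕ), Cardinal.mk ↥B ≤ Cardinal.aleph 1 →
      ∃ C : Set (ℕ → ℕ), C.Countable ∧ ∀ f ∈ B, ∃ g ∈ C, f ≤ g)
    (hnarrow : ∀ U ∈ uniformity X, ∃ C : Set X, C.Countable ∧ ∀ x : X, ∃ c ∈ C, (c, x) ∈ U)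
    (hG : ∃ U : (ℕ → ℕ) → Set (X × X), (∀ α, U α ∈ uniformity X) ∧
      (∀ V ∈ uniformity X, ∃ α, U α ⊆ V) ∧ ∀ α β : ℕ → ℕ, α ≤ β → U β ⊆ U α) :
    WeaklyCosmic (ℕ → X) := by
  obtain ⟨Us, hUmem, hUbase, hUmono⟩ := hG
  intro S hS
  by_contra hScount
  obtain ⟨O, hO, hsep⟩ := hS
  -- X is nonempty (otherwise S ⊆ empty type, countable)
  have hXne : Nonempty X := by
    by_contra h
    have hempty : IsEmpty X := not_nonempty_iff.mp h
    exact hScount (Set.Subsingleton.countable (fun a _ _ _ => (hempty.false (a 0)).elim))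
  have d : X := Classical.choice hXne
  -- shrink S to a subset T of cardinality ℵ₁
  have h1 : Cardinal.aleph 1 ≤ Cardinal.mk ↥S := by
    by_contra h
    exact hScount ((Cardinal.countable_iff_lt_aleph_one S).mpr (lt_of_not_ge h))
  obtain ⟨T, hTS, hTcard⟩ := Cardinal.le_mk_iff_exists_subset.mp h1
  have hTuncount : ¬ T.Countable := by
    rw [Cardinal.countable_iff_lt_aleph_one, hTcard]
    exact lt_irrefl _
  -- basic neighborhoods: finite F and base index α with the α-ball on F inside O x
  have key : ∀ x : ℕ → X, ∃ (F : Finset ℕ) (α : ℕ → ℕ),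
      x ∈ S → ∀ y : ℕ → X, (∀ n ∈ F, (x n, y n) ∈ Us α) → y ∈ O x := by
    intro x
    by_cases hx : x ∈ S
    · obtain ⟨hopen, hmem⟩ := hO x hx
      obtain ⟨I, u, hu, hsub⟩ := isOpen_pi_iff.mp hopen x hmem
      have hV : ∀ n : ℕ, ∃ V ∈ uniformity X, n ∈ I → UniformSpace.ball (x n) V ⊆ u n := by
        intro n
        by_cases hn : n ∈ I
        · obtain ⟨V, hV1, hV2⟩ :=
            UniformSpace.mem_nhds_iff.mp ((hu n hn).1.mem_nhds (hu n hn).2)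
          exact ⟨V, hV1, fun _ => hV2⟩
        · exact ⟨Set.univ, Filter.univ_mem, fun h => absurd h hn⟩
      choose V hVmem hVball using hV
      have hVint : (⋂ n ∈ I, V n) ∈ uniformity X :=
        (Filter.biInter_mem I.finite_toSet).mpr fun n _ => hVmem n
      obtain ⟨α, hα⟩ := hUbase _ hVint
      refine ⟨I, α, fun _ y hy => hsub ?_⟩
      intro n hn
      exact hVball n hn (Set.mem_iInter₂.mp (hα (hy n hn)) n hn)
    · exact ⟨∅, fun _ => 0, fun h => absurd h hx⟩
  choose F α hFα using key
  -- dominate the α's over T by a countable set C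
  have hBcard : Cardinal.mk ↥(α '' T) ≤ Cardinal.aleph 1 := by
    have h2 := Cardinal.mk_image_le_lift (f := α) (s := T)
    rw [hTcard, Cardinal.lift_uzero] at h2
    refine Cardinal.lift_le.mp ?_
    rw [Cardinal.lift_aleph, Ordinal.lift_one]
    exact h2
  obtain ⟨C, hCcount, hCdom⟩ := hb _ hBcard
  have hg' : ∀ x : ℕ → X, ∃ g : ℕ → ℕ, x ∈ T → g ∈ C ∧ α x ≤ g := by
    intro x
    by_cases hx : x ∈ T
    · obtain ⟨g, hg1, hg2⟩ := hCdom (α x) ⟨x, hx, rfl⟩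
      exact ⟨g, fun _ => ⟨hg1, hg2⟩⟩
    · exact ⟨fun _ => 0, fun h => absurd h hx⟩
  choose g hgC using hg'
  -- symmetric half-entourages and ω-narrow countable nets
  have hW : ∀ γ : ℕ → ℕ, ∃ W ∈ uniformity X, SetRel.IsSymm W ∧ SetRel.comp W W ⊆ Us γ :=
    fun γ => comp_symm_mem_uniformity_sets (hUmem γ)
  choose W hWmem hWsymm hWcomp using hW
  have hC0 : ∀ γ : ℕ → ℕ, ∃ C0 : Set X, C0.Countable ∧ ∀ x : X, ∃ c ∈ C0, (c, x) ∈ W γ :=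
    fun γ => hnarrow (W γ) (hWmem γ)
  choose C0 hC0count hC0cov using hC0
  have hc : ∀ (x : ℕ → X) (n : ℕ), ∃ c : X, c ∈ C0 (g x) ∧ (c, x n) ∈ W (g x) :=
    fun x n => hC0cov (g x) (x n)
  choose c hcC0 hcW using hc
  -- the countable coloring
  set Φ : (ℕ → X) → Finset ℕ × (ℕ → ℕ) × (ℕ → X) :=
    fun x => (F x, g x, fun n => if n ∈ F x then c x n else d) with hΦdef
  set H : Finset ℕ → (ℕ → ℕ) → Set (ℕ → X) :=
    fun Fs gg => {h : ℕ → X | (∀ n ∈ Fs, h n ∈ C0 gg) ∧ ∀ n ∉ Fs, h n = d} with hHdef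
  have hHcount : ∀ (Fs : Finset ℕ) (gg : ℕ → ℕ), (H Fs gg).Countable := by
    intro Fs gg
    have hmaps : Set.MapsTo (fun (h : ℕ → X) (n : Fs) => h (n : ℕ)) (H Fs gg)
        {f : Fs → X | ∀ n : Fs, f n ∈ C0 gg} := fun h hh n => hh.1 n n.2
    refine hmaps.countable_of_injOn ?_ (Set.countable_pi fun _ => hC0count gg)
    intro h1 hh1 h2 hh2 heq
    funext n
    by_cases hn : n ∈ Fs
    · exact congrFun heq ⟨n, hn⟩
    · rw [hh1.2 n hn, hh2.2 n hn]
  set P : Set (Finset ℕ × (ℕ → ℕ) × (ℕ → X)) :=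
    ⋃ (Fs : Finset ℕ), ⋃ gg ∈ C, (fun h => (Fs, gg, h)) '' H Fs gg with hPdef
  have hPcount : P.Countable :=
    Set.countable_iUnion fun Fs =>
      Set.Countable.biUnion hCcount fun gg _ => ((hHcount Fs gg).image _)
  have hΦsub : Φ '' T ⊆ P := by
    rintro _ ⟨x, hx, rfl⟩
    refine Set.mem_iUnion.mpr ⟨F x, Set.mem_biUnion ((hgC x hx).1) ?_⟩
    refine ⟨fun n => if n ∈ F x then c x n else d, ⟨?_, ?_⟩, rfl⟩
    · intro n hn
      simpa [hn] using hcC0 x n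
    · intro n hn
      simp [hn]
  -- Φ cannot be injective on the uncountable T
  have hnotinj : ¬ Set.InjOn Φ T := fun hinj =>
    hTuncount (Set.countable_of_injective_of_countable_image hinj (hPcount.mono hΦsub))
  rw [Set.InjOn] at hnotinj
  push_neg at hnotinj
  obtain ⟨x, hx, y, hy, hΦeq, hne⟩ := hnotinj
  have hFxy : F x = F y := congrArg Prod.fst hΦeq
  have hgxy : g x = g y := congrArg (fun p => p.2.1) hΦeq
  have hhxy : (fun n => if n ∈ F x then c x n else d) = fun n => if n ∈ F y then c y n else d :=
    congrArg (fun p => p.2.2) hΦeq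
  -- for every n ∈ F x, x n and y n are Us (g x)-close both ways
  have hclose : ∀ n ∈ F x, (x n, y n) ∈ Us (g x) ∧ (y n, x n) ∈ Us (g x) := by
    intro n hn
    have hn' : n ∈ F y := hFxy ▸ hn
    have hcn : c x n = c y n := by
      have := congrFun hhxy n
      rwa [if_pos hn, if_pos hn'] at this
    have h1 : (c x n, x n) ∈ W (g x) := hcW x n
    have h2 : (c x n, y n) ∈ W (g x) := by
      rw [hcn, hgxy]; exact hcW y n
    have h3 : (x n, c x n) ∈ W (g x) := (hWsymm (g x)).symm _ _ h1
    have h4 : (y n, c x n) ∈ W (g x) := (hWsymm (g x)).symm _ _ h2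
    exact ⟨hWcomp (g x) (SetRel.prodMk_mem_comp h3 h2),
      hWcomp (g x) (SetRel.prodMk_mem_comp h4 h1)⟩
  have hyOx : y ∈ O x := by
    refine hFα x (hTS hx) y fun n hn => ?_
    exact hUmono (α x) (g x) (hgC x hx).2 (hclose n hn).1
  have hxOy : x ∈ O y := by
    refine hFα y (hTS hy) x fun n hn => ?_
    have hn' : n ∈ F x := hFxy ▸ hn
    have := (hclose n hn').2
    rw [hgxy] at this
    exact hUmono (α y) (g y) (hgC y hy).2 this
  rcases hsep x (hTS hx) y (hTS hy) hne with h | h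
  · exact h hxOy
  · exact h hyOx
end

section
/- Let 𝔟 denote the least cardinality of a set B ⊆ ω^ω which is not dominated by any countable subset of ω^ω (i.e., for which there is no countable C ⊆ ω^ω such that every f ∈ B satisfies f ≤ g for some g ∈ C). Then there exists a monotone cofinal map from the poset (ω^ω, ≤) to the set of ordinals smaller than 𝔟 with their usual order; in other words, ω^ω ≽ 𝔟. -/
/-- The cardinal `𝔟`: the least cardinality of a subset `B ⊆ ω^ω` which is not dominated
by any countable subset of `ω^ω`. -/
noncomputable def bCardinal : Cardinal :=
  sInf {c : Cardinal | ∃ B : Set (ℕ → ℕ), Cardinal.mk ↥B = c ∧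
    ¬ ∃ C : Set (ℕ → ℕ), C.Countable ∧ ∀ f ∈ B, ∃ g ∈ C, f ≤ g}

/-- Eventual domination. -/
def EvDom (f g : ℕ → ℕ) : Prop := ∃ N, ∀ n ≥ N, f n ≤ g n

lemma evDom_mono {f g g' : ℕ → ℕ} (h : EvDom f g) (hg : g ≤ g') : EvDom f g' := by
  obtain ⟨N, hN⟩ := h
  exact ⟨N, fun n hn => (hN n hn).trans (hg n)⟩

/-- No countable set pointwise-dominates all of `ω^ω`. -/
lemma not_dominated_univ :
    ¬ ∃ C : Set (ℕ → ℕ), C.Countable ∧ ∀ f ∈ (Set.univ : Set (ℕ → ℕ)), ∃ g ∈ C, f ≤ g := by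
  rintro ⟨C, hC, hdom⟩
  have hCne : C.Nonempty := by
    obtain ⟨g, hg, -⟩ := hdom (fun _ => 0) (Set.mem_univ _)
    exact ⟨g, hg⟩
  obtain ⟨e, he⟩ := hC.exists_eq_range hCne
  obtain ⟨g, hg, hle⟩ := hdom (fun k => e k k + 1) (Set.mem_univ _)
  rw [he] at hg
  obtain ⟨k, rfl⟩ := hg
  exact absurd (hle k) (by simp)

lemma bCardinal_mem :
    bCardinal ∈ {c : Cardinal | ∃ B : Set (ℕ → ℕ), Cardinal.mk ↥B = c ∧
      ¬ ∃ C : Set (ℕ → ℕ), C.Countable ∧ ∀ f ∈ B, ∃ g ∈ C, f ≤ g} :=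
  csInf_mem ⟨_, Set.univ, rfl, not_dominated_univ⟩

/-- There is a monotone cofinal map from the poset `ω^ω` (with the pointwise order) to
the set of ordinals smaller than `𝔟` with their usual order; that is, `ω^ω ≽ 𝔟`. -/
theorem exists_monotone_cofinal_to_b :
    ∃ φ : (ℕ → ℕ) → {o : Ordinal // o < bCardinal.ord},
      Monotone φ ∧ ∀ q : {o : Ordinal // o < bCardinal.ord}, ∃ p : ℕ → ℕ, q ≤ φ p := by
  classical
  obtain ⟨B, hB, hBnd⟩ := bCardinal_mem
  -- an enumeration of `B` by the ordinals below `bCardinal.ord`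
  have hcardO : Cardinal.lift.{0} (Cardinal.mk {o : Ordinal // o < bCardinal.ord})
      = Cardinal.lift.{1} (Cardinal.mk ↥B) := by
    have h1 : Cardinal.mk {o : Ordinal // o < bCardinal.ord}
        = Cardinal.lift.{1} bCardinal.ord.card := Ordinal.mk_Iio_ordinal _
    rw [h1, hB, Cardinal.card_ord, Cardinal.lift_lift]
  obtain ⟨e⟩ := Cardinal.lift_mk_eq'.mp hcardO
  set F : {o : Ordinal // o < bCardinal.ord} → (ℕ → ℕ) := fun α => (e α : ℕ → ℕ) with hF
  -- the "first function not eventually dominated" sets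
  set Sg : (ℕ → ℕ) → Set Ordinal :=
    fun g => {o : Ordinal | ∃ h : o < bCardinal.ord, ¬ EvDom (F ⟨o, h⟩) g} with hSg
  have hSgne : ∀ g, (Sg g).Nonempty := by
    intro g
    by_contra hemp
    rw [Set.not_nonempty_iff_eq_empty] at hemp
    -- then every element of B is eventually dominated by g, so B is dominated by
    -- the countable set {g + k : k ∈ ℕ}
    apply hBnd
    refine ⟨Set.range (fun k : ℕ => fun n => g n + k), Set.countable_range _, ?_⟩
    intro b hb
    set α := e.symm ⟨b, hb⟩ with hα
    have hFα : F α = b := by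
      simp [hF, hα]
    have hev : EvDom (F α) g := by
      by_contra hne
      have : (α : Ordinal) ∈ Sg g := ⟨α.2, by
        convert hne using 3⟩
      simp [hemp] at this
    rw [hFα] at hev
    obtain ⟨N, hN⟩ := hev
    refine ⟨fun n => g n + (Finset.range N).sup b, ⟨(Finset.range N).sup b, rfl⟩, ?_⟩
    intro n
    rcases lt_or_ge n N with h | h
    · calc b n ≤ (Finset.range N).sup b := Finset.le_sup (Finset.mem_range.mpr h)
        _ ≤ g n + (Finset.range N).sup b := Nat.le_add_left _ _
    · exact (hN n h).trans (Nat.le_add_right _ _)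
  have hlt : ∀ g, sInf (Sg g) < bCardinal.ord := fun g => (csInf_mem (hSgne g)).choose
  refine ⟨fun g => ⟨sInf (Sg g), hlt g⟩, ?_, ?_⟩
  · -- monotone
    intro g g' hgg'
    have hsub : Sg g' ⊆ Sg g := by
      rintro o ⟨h, hnd⟩
      exact ⟨h, fun hd => hnd (evDom_mono hd hgg')⟩
    exact csInf_le' (hsub (csInf_mem (hSgne g')))
  · -- cofinal
    rintro ⟨β, hβ⟩
    set Bβ : Set (ℕ → ℕ) := F '' {α | (α : Ordinal) < β} with hBβ
    -- Bβ has cardinality < bCardinal, hence is dominated by a countable set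
    have hcard : Cardinal.mk ↥Bβ < bCardinal := by
      have h1 : Cardinal.lift.{1} (Cardinal.mk ↥Bβ)
          ≤ Cardinal.lift.{0} (Cardinal.mk {α : {o : Ordinal // o < bCardinal.ord} |
            (α : Ordinal) < β}) := Cardinal.mk_image_le_lift
      have h2 : Cardinal.mk {α : {o : Ordinal // o < bCardinal.ord} | (α : Ordinal) < β}
          ≤ Cardinal.mk (Set.Iio β) := by
        exact Cardinal.mk_le_of_injective (f := fun α => ⟨(α : Ordinal), α.2⟩)
          (by rintro ⟨⟨a, _⟩, _⟩ ⟨⟨b, _⟩, _⟩ h; have := congrArg Subtype.val h; simp_all)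
      have h3 : Cardinal.mk (Set.Iio β) = Cardinal.lift.{1} β.card :=
        Ordinal.mk_Iio_ordinal _
      have h4 : Cardinal.lift.{1} (Cardinal.mk ↥Bβ) ≤ Cardinal.lift.{1} β.card := by
        calc Cardinal.lift.{1} (Cardinal.mk ↥Bβ)
            ≤ Cardinal.lift.{0} (Cardinal.mk _) := h1
          _ ≤ Cardinal.lift.{0} (Cardinal.mk (Set.Iio β)) := by
              rw [Cardinal.lift_le]; exact h2
          _ = Cardinal.lift.{1} β.card := by rw [h3, Cardinal.lift_lift]
      rw [Cardinal.lift_le] at h4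
      exact lt_of_le_of_lt h4 (Cardinal.lt_ord.mp hβ)
    have hdomBβ : ∃ C : Set (ℕ → ℕ), C.Countable ∧ ∀ f ∈ Bβ, ∃ g ∈ C, f ≤ g := by
      by_contra h
      have : bCardinal ≤ Cardinal.mk ↥Bβ :=
        csInf_le' (show Cardinal.mk ↥Bβ ∈ {c : Cardinal | ∃ B : Set (ℕ → ℕ),
          Cardinal.mk ↥B = c ∧ ¬ ∃ C : Set (ℕ → ℕ), C.Countable ∧ ∀ f ∈ B, ∃ g ∈ C, f ≤ g}
          from ⟨Bβ, rfl, h⟩)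
      exact absurd this (not_le.mpr hcard)
    obtain ⟨C, hC, hdom⟩ := hdomBβ
    have hC' : (insert (fun _ => 0) C : Set (ℕ → ℕ)).Countable := hC.insert _
    obtain ⟨c, hc⟩ := hC'.exists_eq_range ⟨_, Set.mem_insert _ _⟩
    -- the diagonal sup dominates Bβ eventually
    set g : ℕ → ℕ := fun n => (Finset.range (n + 1)).sup (fun k => c k n) with hg
    have hgev : ∀ b ∈ Bβ, EvDom b g := by
      intro b hb
      obtain ⟨d, hd, hbd⟩ := hdom b hb
      have : d ∈ Set.range c := by rw [← hc]; exact Set.mem_insert_of_mem _ hd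
      obtain ⟨k, rfl⟩ := this
      refine ⟨k, fun n hn => (hbd n).trans ?_⟩
      exact Finset.le_sup (f := fun k => c k n) (Finset.mem_range.mpr (Nat.lt_succ_of_le hn))
    refine ⟨g, ?_⟩
    show β ≤ sInf (Sg g)
    refine le_csInf (hSgne g) ?_
    rintro o ⟨ho, hnd⟩
    by_contra hlt'
    push_neg at hlt'
    exact hnd (hgev _ ⟨⟨o, ho⟩, hlt', rfl⟩)
end

section
/- Let X be a uniform space and D ⊆ X a dense subset (with respect to the topology induced by the uniformity). Then there exists a monotone cofinal map from the poset 𝒰(X)^ω × ℕ^D (with coordinatewise order, where ℕ^D is ordered pointwise) to the poset ℰ(C_u(X)); in particular, if X has density κ, then 𝒰(X)^ω × ω^κ ≽ ℰ(C_u(X)). -/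
/-- A set `E` of real functions on a uniform space is a member of `ℰ(C_u(X))` if all its
members are uniformly continuous, it is pointwise bounded, and it is equicontinuous. -/
def PtwiseBddEquicont {X : Type*} [UniformSpace X] (E : Set (X → ℝ)) : Prop :=
  (∀ f ∈ E, UniformContinuous f) ∧
  (∀ x : X, ∃ M : ℝ, ∀ f ∈ E, |f x| ≤ M) ∧
  (∀ ε : ℝ, 0 < ε → ∃ U ∈ uniformity X, ∀ f ∈ E, ∀ p : X × X, p ∈ U → |f p.1 - f p.2| < ε)

/-- For a uniform space `X` with dense subset `D`, there is a monotone cofinal map from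
the poset `𝒰(X)^ω × ℕ^D` (entourages ordered by reverse inclusion, `ℕ^D` pointwise) to
the poset `ℰ(C_u(X))` of pointwise bounded equicontinuous subsets of `C_u(X)`, ordered
by inclusion. -/
theorem exists_monotone_cofinal_to_equicont
    {X : Type*} [UniformSpace X] (D : Set X) (hD : Dense D) :
    ∃ Φ : (ℕ → {U : Set (X × X) // U ∈ uniformity X}) × (D → ℕ) → Set (X → ℝ),
      (∀ p, PtwiseBddEquicont (Φ p)) ∧
      (∀ p q : (ℕ → {U : Set (X × X) // U ∈ uniformity X}) × (D → ℕ),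
        (∀ n, (q.1 n : Set (X × X)) ⊆ (p.1 n : Set (X × X))) → (∀ d, p.2 d ≤ q.2 d) →
        Φ p ⊆ Φ q) ∧
      ∀ E : Set (X → ℝ), PtwiseBddEquicont E → ∃ p, E ⊆ Φ p := by
  refine ⟨fun p => {f | UniformContinuous f ∧ (∀ d : D, |f d| ≤ p.2 d) ∧
      ∀ n : ℕ, ∀ q : X × X, q ∈ (p.1 n : Set (X × X)) → |f q.1 - f q.2| ≤ 1 / (n + 1)},
    ?_, ?_, ?_⟩
  · intro p
    refine ⟨fun f hf => hf.1, ?_, ?_⟩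
    · intro x
      have hball : UniformSpace.ball x (p.1 0 : Set (X × X)) ∈ nhds x :=
        UniformSpace.ball_mem_nhds x (p.1 0).2
      obtain ⟨d, hd1, hd2⟩ := mem_closure_iff_nhds.mp (hD x) _ hball
      refine ⟨p.2 ⟨d, hd2⟩ + 1, fun f hf => ?_⟩
      have h1 : |f x - f d| ≤ 1 / ((0:ℕ) + 1) := hf.2.2 0 (x, d) hd1
      have h2 : |f d| ≤ p.2 ⟨d, hd2⟩ := hf.2.1 ⟨d, hd2⟩
      have : |f x| ≤ |f d| + |f x - f d| := by
        have := abs_sub_abs_le_abs_sub (f x) (f d)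
        linarith [abs_nonneg (f x - f d)]
      norm_num at h1
      linarith
    · intro ε hε
      obtain ⟨n, hn⟩ := exists_nat_one_div_lt hε
      refine ⟨(p.1 n : Set (X × X)), (p.1 n).2, fun f hf q hq => ?_⟩
      exact lt_of_le_of_lt (hf.2.2 n q hq) hn
  · rintro p q hU hφ f ⟨hf1, hf2, hf3⟩
    exact ⟨hf1, fun d => le_trans (hf2 d) (by exact_mod_cast hφ d),
      fun n r hr => hf3 n r (hU n hr)⟩
  · rintro E ⟨hE1, hE2, hE3⟩
    choose U hU hU2 using fun n : ℕ =>
      hE3 (1 / (n + 1)) (by positivity)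
    choose M hM using hE2
    refine ⟨⟨fun n => ⟨U n, hU n⟩, fun d => ⌈M d⌉₊⟩, fun f hf => ⟨hE1 f hf, ?_, ?_⟩⟩
    · intro d
      exact le_trans (hM d f hf) (Nat.le_ceil _)
    · intro n r hr
      exact le_of_lt (hU2 n f hf r hr)
end

section
/- For every uniform space X there exists a monotone cofinal map from the poset ℰ(C_u(X)) to the poset 𝒰(X)^ω × C_u(X) (with coordinatewise order, where C_u(X) is ordered pointwise); that is, ℰ(C_u(X)) ≽ 𝒰(X)^ω × C_u(X). -/
open Filter Set

section Aux

variable {X : Type*} [UniformSpace X]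

lemma exists_pm {X : Type*} [UniformSpace X] {V : Set (X × X)} (hV : V ∈ uniformity X) :
    ∃ (d : X → X → ℝ) (ε : ℝ), 0 < ε ∧ (∀ x, d x x = 0) ∧ (∀ x y, 0 ≤ d x y) ∧
      (∀ x y, d x y = d y x) ∧ (∀ x y z, d x z ≤ d x y + d y z) ∧
      (∀ δ : ℝ, 0 < δ → {p : X × X | d p.1 p.2 < δ} ∈ uniformity X) ∧
      {p : X × X | d p.1 p.2 < ε} ⊆ V := by
  classical
  choose! t ht hsymm hcomp using fun (s : Set (X × X)) (hs : s ∈ uniformity X) =>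
    comp_symm_mem_uniformity_sets hs
  set W : ℕ → Set (X × X) := fun n => Nat.rec (t V) (fun _ s => t s) n with hW
  have hW0 : W 0 = t V := rfl
  have hWsucc : ∀ n, W (n + 1) = t (W n) := fun n => rfl
  have hWmem : ∀ n, W n ∈ uniformity X := by
    intro n; induction n with
    | zero => exact ht V hV
    | succ n ih => rw [hWsucc]; exact ht _ ih
  have hWcomp : ∀ n, SetRel.comp (W (n + 1)) (W (n + 1)) ⊆ W n := by
    intro n; rw [hWsucc]; exact hcomp _ (hWmem n)
  have hWs : ∀ n, SetRel.IsSymm (W n) := by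
    intro n; cases n with
    | zero => exact hsymm V hV
    | succ n => exact hsymm _ (hWmem n)
  have hsub : ∀ n, W n ⊆ SetRel.comp (W n) (W n) := fun n s hs =>
    ⟨s.1, refl_mem_uniformity (hWmem n), hs⟩
  have hanti : ∀ n, W (n + 1) ⊆ W n := fun n =>
    (hsub (n + 1)).trans (hWcomp n)
  have hanti' : Antitone W := antitone_nat_of_succ_le hanti
  have hW0V : W 0 ⊆ V := (hsub 0).trans (hcomp V hV)
  set F : Filter (X × X) := ⨅ n, 𝓟 (W n) with hF
  have hbasis : F.HasBasis (fun _ : ℕ => True) W :=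
    hasBasis_iInf_principal (fun m n => ⟨max m n, hanti' (le_max_left m n),
      hanti' (le_max_right m n)⟩)
  have hmemF : ∀ n, W n ∈ F := fun n => hbasis.mem_of_mem trivial
  have hle : ∀ s ∈ F, s ∈ uniformity X := by
    intro s hs
    obtain ⟨n, -, hn⟩ := hbasis.mem_iff.1 hs
    exact mem_of_superset (hWmem n) hn
  let core : UniformSpace.Core X := UniformSpace.Core.mk' F
    (fun r hr x => by
      obtain ⟨n, -, hn⟩ := hbasis.mem_iff.1 hr
      exact hn (refl_mem_uniformity (hWmem n)))
    (fun r hr => by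
      obtain ⟨n, -, hn⟩ := hbasis.mem_iff.1 hr
      exact mem_of_superset (hmemF n) (by
        intro p hp
        exact hn (by haveI := hWs n; exact SetRel.symm (R := W n) (a := p.1) (b := p.2) hp)))
    (fun r hr => by
      obtain ⟨n, -, hn⟩ := hbasis.mem_iff.1 hr
      exact ⟨W (n + 1), hmemF (n + 1), (hWcomp n).trans hn⟩)
  let u' : UniformSpace X := UniformSpace.ofCore core
  have hu' : @uniformity X u' = F := rfl
  haveI hcg : @IsCountablyGenerated _ (@uniformity X u') := by
    rw [hu', hF]; exact isCountablyGenerated_seq W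
  obtain ⟨I, hI⟩ := @UniformSpace.metrizable_uniformity X u' hcg
  have hIu : @uniformity X I.toUniformSpace = F := by rw [hI, hu']
  refine ⟨@dist X I.toDist, ?_⟩
  have hVF : V ∈ F := mem_of_superset (hmemF 0) hW0V
  rw [← hIu] at hVF
  obtain ⟨ε, hε, hball⟩ := (@Metric.mem_uniformity_dist X I V).1 hVF
  refine ⟨ε, hε, I.dist_self, fun x y => @dist_nonneg X I x y,
    fun x y => @PseudoMetricSpace.dist_comm X I x y,
    fun x y z => @PseudoMetricSpace.dist_triangle X I x y z, ?_, ?_⟩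
  · intro δ hδ
    exact hle _ (hIu ▸ @Metric.dist_mem_uniformity X I δ hδ)
  · intro p hp
    exact hball hp

noncomputable def phi1 (E : Set (X → ℝ)) (n : ℕ) : Set (X × X) :=
  {p : X × X | ∀ f ∈ E, |f p.1 - f p.2| ≤ 1 / (n + 1)}

lemma phi1_mem {E : Set (X → ℝ)} (hE : PtwiseBddEquicont E) (n : ℕ) :
    phi1 E n ∈ uniformity X := by
  obtain ⟨U, hU, hUp⟩ := hE.2.2 (1 / (n + 1)) (by positivity)
  exact mem_of_superset hU fun p hp f hf => (hUp f hf p hp).le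

noncomputable def sups (E : Set (X → ℝ)) (x : X) : ℝ :=
  sSup (insert (0 : ℝ) ((fun f => f x) '' E))

lemma sups_bdd {E : Set (X → ℝ)} (hE : PtwiseBddEquicont E) (x : X) :
    BddAbove (insert (0 : ℝ) ((fun f => f x) '' E)) := by
  obtain ⟨M, hM⟩ := hE.2.1 x
  refine ⟨max M 0, fun a ha => ?_⟩
  rcases ha with rfl | ⟨f, hf, rfl⟩
  · exact le_max_right _ _
  · exact le_trans (le_abs_self _) (le_trans (hM f hf) (le_max_left _ _))

lemma le_sups {E : Set (X → ℝ)} (hE : PtwiseBddEquicont E) {f : X → ℝ} (hf : f ∈ E) (x : X) :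
    f x ≤ sups E x :=
  le_csSup (sups_bdd hE x) (Or.inr ⟨f, hf, rfl⟩)

lemma sups_nonneg {E : Set (X → ℝ)} (hE : PtwiseBddEquicont E) (x : X) :
    0 ≤ sups E x :=
  le_csSup (sups_bdd hE x) (Or.inl rfl)

lemma sups_uc {E : Set (X → ℝ)} (hE : PtwiseBddEquicont E) :
    UniformContinuous (sups E) := by
  rw [UniformContinuous, Metric.uniformity_basis_dist.tendsto_right_iff]
  intro ε hε
  obtain ⟨U, hU, hUp⟩ := hE.2.2 (ε / 2) (by positivity)
  filter_upwards [hU] with p hp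
  have h1 : sups E p.1 ≤ sups E p.2 + ε / 2 := by
    refine csSup_le (insert_nonempty _ _) fun a ha => ?_
    rcases ha with rfl | ⟨f, hf, rfl⟩
    · exact le_add_of_nonneg_of_le (sups_nonneg hE p.2) (by positivity)
    · have h := abs_sub_lt_iff.1 (hUp f hf p hp)
      have := le_sups hE hf p.2
      simp only at h ⊢
      linarith [h.1]
  have h2 : sups E p.2 ≤ sups E p.1 + ε / 2 := by
    refine csSup_le (insert_nonempty _ _) fun a ha => ?_
    rcases ha with rfl | ⟨f, hf, rfl⟩
    · exact le_add_of_nonneg_of_le (sups_nonneg hE p.1) (by positivity)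
    · have h := abs_sub_lt_iff.1 (hUp f hf p hp)
      have := le_sups hE hf p.1
      simp only at h ⊢
      linarith [h.2]
  simp only [Real.dist_eq]
  rw [abs_sub_lt_iff]
  constructor <;> linarith

end Aux

section Aux2

variable {X : Type*} [UniformSpace X]

lemma sups_mono {E F : Set (X → ℝ)} (hF : PtwiseBddEquicont F) (h : E ⊆ F) (x : X) :
    sups E x ≤ sups F x :=
  csSup_le_csSup (sups_bdd hF x) (insert_nonempty _ _)
    (insert_subset_insert (image_mono h))

lemma cofinal_E (V : ℕ → {U : Set (X × X) // U ∈ uniformity X})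
    (g : {f : X → ℝ // UniformContinuous f}) :
    ∃ E : Set (X → ℝ), PtwiseBddEquicont E ∧ g.1 ∈ E ∧
      ∀ n, phi1 E n ⊆ (V n : Set (X × X)) := by
  classical
  choose d ε hε hd0 hdnn hdsym hdtri hdmem hdsub using fun n => exists_pm (V n).2
  set c : ℕ → ℝ := fun n => 2 / ((n + 1) * ε n) with hc
  have hcpos : ∀ n, 0 < c n := fun n => by
    have := hε n; rw [hc]; positivity
  set fam : ℕ → X → X → ℝ := fun n y x => min (c n * d n x y) (2 / (n + 1)) with hfam
  have famA : ∀ n y x x', |fam n y x - fam n y x'| ≤ c n * d n x x' := by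
    intro n y x x'
    have h1 : |fam n y x - fam n y x'| ≤ |c n * d n x y - c n * d n x' y| := by
      refine (abs_min_sub_min_le_max _ _ _ _).trans ?_
      simp
    refine h1.trans ?_
    rw [← mul_sub, abs_mul, abs_of_pos (hcpos n)]
    refine mul_le_mul_of_nonneg_left ?_ (hcpos n).le
    rw [abs_sub_le_iff]
    constructor
    · linarith [hdtri n x x' y]
    · have := hdtri n x' x y
      have hs := hdsym n x x'
      linarith
  have famNN : ∀ n y x, 0 ≤ fam n y x := fun n y x =>
    le_min (mul_nonneg (hcpos n).le (hdnn n x y)) (by positivity)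
  have famLE : ∀ n y x, fam n y x ≤ 2 / (n + 1) := fun n y x => min_le_right _ _
  set E₀ : Set (X → ℝ) := insert g.1 {f | ∃ n y, f = fam n y} with hE₀
  have hPBE : PtwiseBddEquicont E₀ := by
    refine ⟨?_, ?_, ?_⟩
    · rintro f (rfl | ⟨n, y, rfl⟩)
      · exact g.2
      · rw [UniformContinuous, Metric.uniformity_basis_dist.tendsto_right_iff]
        intro δ hδ
        filter_upwards [hdmem n (δ / c n) (div_pos hδ (hcpos n))] with p hp
        simp only [Real.dist_eq]
        calc |fam n y p.1 - fam n y p.2| ≤ c n * d n p.1 p.2 := famA n y p.1 p.2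
          _ < δ := by
            rw [mul_comm]; exact (lt_div_iff₀ (hcpos n)).1 hp
    · intro x
      refine ⟨max |g.1 x| 2, ?_⟩
      rintro f (rfl | ⟨n, y, rfl⟩)
      · exact le_max_left _ _
      · rw [abs_of_nonneg (famNN n y x)]
        refine le_trans (famLE n y x) (le_trans ?_ (le_max_right _ _))
        rw [div_le_iff₀ (by positivity)]
        have hn0 : (0:ℝ) ≤ (n : ℝ) := Nat.cast_nonneg n
        nlinarith
    · intro δ hδ
      obtain ⟨N, hN⟩ := exists_nat_gt (2 / δ)
      have hNlt : ∀ n : ℕ, N ≤ n → 2 / ((n : ℝ) + 1) < δ := by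
        intro n hn
        rw [div_lt_iff₀ (by positivity)]
        have h2 : (2 : ℝ) / δ < (n : ℝ) + 1 := by
          refine lt_of_lt_of_le hN ?_
          have : (N : ℝ) ≤ (n : ℝ) := by exact_mod_cast hn
          linarith
        calc (2 : ℝ) = (2 / δ) * δ := by field_simp
          _ < ((n : ℝ) + 1) * δ := mul_lt_mul_of_pos_right h2 hδ
          _ = δ * ((n : ℝ) + 1) := mul_comm _ _
      refine ⟨{p | dist (g.1 p.1) (g.1 p.2) < δ} ∩
        ⋂ n ∈ Finset.range N, {p : X × X | c n * d n p.1 p.2 < δ}, ?_, ?_⟩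
      · refine inter_mem (g.2 (Metric.dist_mem_uniformity hδ)) ?_
        refine (biInter_finset_mem _).2 fun n _ => ?_
        refine mem_of_superset (hdmem n (δ / c n) (div_pos hδ (hcpos n))) fun p hp => ?_
        exact (lt_div_iff₀' (hcpos n)).1 hp
      · rintro f (rfl | ⟨n, y, rfl⟩) p hp
        · have h0 : dist ((g : X → ℝ) p.1) ((g : X → ℝ) p.2) < δ := hp.1
          rwa [Real.dist_eq] at h0
        · rcases lt_or_ge n N with h | h
          · have hpn := Set.mem_iInter₂.1 hp.2 n (Finset.mem_range.2 h)
            exact lt_of_le_of_lt (famA n y p.1 p.2) hpn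
          · have h1 := famLE n y p.1
            have h2 := famLE n y p.2
            have h3 := famNN n y p.1
            have h4 := famNN n y p.2
            have h5 := hNlt n h
            rw [abs_sub_lt_iff]
            constructor <;> linarith
  refine ⟨E₀, hPBE, Or.inl rfl, ?_⟩
  intro n p hp
  have hfp := hp (fam n p.2) (Or.inr ⟨n, p.2, rfl⟩)
  have hzero : fam n p.2 p.2 = 0 := by
    show min (c n * d n p.2 p.2) (2 / (n + 1)) = 0
    rw [hd0 n p.2, mul_zero]
    exact min_eq_left (by positivity)
  rw [hzero, sub_zero, abs_of_nonneg (famNN n p.2 p.1)] at hfp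
  have hfp' : min (c n * d n p.1 p.2) (2 / ((n : ℝ) + 1)) ≤ 1 / ((n : ℝ) + 1) := hfp
  have h12 : (1 : ℝ) / (n + 1) < 2 / (n + 1) := by
    have h : (0 : ℝ) < (n : ℝ) + 1 := by positivity
    rw [div_lt_div_iff₀ h h]; nlinarith
  have hmin : c n * d n p.1 p.2 ≤ 1 / (n + 1) := by
    rcases le_total (c n * d n p.1 p.2) (2 / ((n : ℝ) + 1)) with h' | h'
    · rwa [min_eq_left h'] at hfp'
    · rw [min_eq_right h'] at hfp'
      exact absurd hfp' (not_le.2 h12)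
  have hdlt : d n p.1 p.2 < ε n := by
    have h6 : d n p.1 p.2 ≤ (1 / ((n : ℝ) + 1)) / c n := (le_div_iff₀' (hcpos n)).2 hmin
    have heq : (1 / ((n : ℝ) + 1)) / c n = ε n / 2 := by
      rw [hc]
      have h7 : ((n : ℝ) + 1) ≠ 0 := by positivity
      have h8 : ε n ≠ 0 := (hε n).ne'
      field_simp
    rw [heq] at h6
    linarith [hε n]
  exact hdsub n hdlt

end Aux2

/-- For every uniform space `X` there is a monotone cofinal map from the poset
`ℰ(C_u(X))` (pointwise bounded equicontinuous subsets of `C_u(X)`, ordered by inclusion)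
to the poset `𝒰(X)^ω × C_u(X)` (entourages ordered by reverse inclusion, `C_u(X)`
ordered pointwise); that is, `ℰ(C_u(X)) ≽ 𝒰(X)^ω × C_u(X)`. -/
theorem equicont_reduces_to_unif_pow_times_Cu {X : Type*} [UniformSpace X] :
    ∃ Ψ : {E : Set (X → ℝ) // PtwiseBddEquicont E} →
        (ℕ → {U : Set (X × X) // U ∈ uniformity X}) × {f : X → ℝ // UniformContinuous f},
      (∀ E F : {E : Set (X → ℝ) // PtwiseBddEquicont E}, E.1 ⊆ F.1 →
        (∀ n, ((Ψ F).1 n : Set (X × X)) ⊆ ((Ψ E).1 n : Set (X × X))) ∧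
        ∀ x : X, ((Ψ E).2 : X → ℝ) x ≤ ((Ψ F).2 : X → ℝ) x) ∧
      ∀ (V : ℕ → {U : Set (X × X) // U ∈ uniformity X})
        (g : {f : X → ℝ // UniformContinuous f}),
        ∃ E : {E : Set (X → ℝ) // PtwiseBddEquicont E},
          (∀ n, ((Ψ E).1 n : Set (X × X)) ⊆ (V n : Set (X × X))) ∧
          ∀ x : X, (g : X → ℝ) x ≤ ((Ψ E).2 : X → ℝ) x := by
  refine ⟨fun E => (fun n => ⟨phi1 E.1 n, phi1_mem E.2 n⟩, ⟨sups E.1, sups_uc E.2⟩), ?_, ?_⟩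
  · intro E F h
    exact ⟨fun n p hp f hf => hp f (h hf), fun x => sups_mono F.2 h x⟩
  · intro V g
    obtain ⟨E, hE, hgE, hsub⟩ := cofinal_E V g
    exact ⟨⟨E, hE⟩, hsub, fun x => le_sups hE hgE x⟩
end

section
/- For every uniform space X there exists a monotone cofinal map from the poset 𝒰(X)^ω × C_u(X) (with coordinatewise order, where C_u(X) is ordered pointwise) to the poset ℰ(C_u(X)); that is, 𝒰(X)^ω × C_u(X) ≽ ℰ(C_u(X)). -/
/-- For every uniform space `X` there is a monotone cofinal map from the poset
`𝒰(X)^ω × C_u(X)` (entourages ordered by reverse inclusion, `C_u(X)` ordered pointwise)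
to the poset `ℰ(C_u(X))` of pointwise bounded equicontinuous subsets of `C_u(X)`,
ordered by inclusion; that is, `𝒰(X)^ω × C_u(X) ≽ ℰ(C_u(X))`. -/
theorem unif_pow_times_Cu_reduces_to_equicont {X : Type*} [UniformSpace X] :
    ∃ Φ : (ℕ → {U : Set (X × X) // U ∈ uniformity X}) ×
        {f : X → ℝ // UniformContinuous f} → Set (X → ℝ),
      (∀ p, PtwiseBddEquicont (Φ p)) ∧
      (∀ p q : (ℕ → {U : Set (X × X) // U ∈ uniformity X}) ×
          {f : X → ℝ // UniformContinuous f},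
        (∀ n, (q.1 n : Set (X × X)) ⊆ (p.1 n : Set (X × X))) →
        (∀ x : X, (p.2 : X → ℝ) x ≤ (q.2 : X → ℝ) x) → Φ p ⊆ Φ q) ∧
      ∀ E : Set (X → ℝ), PtwiseBddEquicont E → ∃ p, E ⊆ Φ p := by
  
  classical
  refine ⟨fun p => {f | UniformContinuous f ∧ (∀ x, |f x| ≤ (p.2 : X → ℝ) x) ∧
      ∀ n : ℕ, ∀ z : X × X, z ∈ (p.1 n : Set (X × X)) →
        |f z.1 - f z.2| ≤ 1 / (n + 1)}, ?_, ?_, ?_⟩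
  · intro p
    refine ⟨fun f hf => hf.1, fun x => ⟨(p.2 : X → ℝ) x, fun f hf => hf.2.1 x⟩, ?_⟩
    intro ε hε
    obtain ⟨n, hn⟩ := exists_nat_one_div_lt hε
    exact ⟨(p.1 n : Set (X × X)), (p.1 n).2,
      fun f hf z hz => lt_of_le_of_lt (hf.2.2 n z hz) hn⟩
  · intro p q hU hg f hf
    exact ⟨hf.1, fun x => (hf.2.1 x).trans (hg x),
      fun n z hz => hf.2.2 n z (hU n hz)⟩
  · intro E hE
    have hch : ∀ n : ℕ, ∃ U ∈ uniformity X, ∀ f ∈ E, ∀ z : X × X, z ∈ U →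
        |f z.1 - f z.2| < 1 / (n + 1) := fun n => hE.2.2 _ (by positivity)
    choose U hUmem hUprop using hch
    set g : X → ℝ := fun x => ⨆ f : E, |(f : X → ℝ) x| with hgdef
    have bdd : ∀ x : X, BddAbove (Set.range fun f : E => |(f : X → ℝ) x|) := by
      intro x
      obtain ⟨M, hM⟩ := hE.2.1 x
      exact ⟨M, by rintro _ ⟨f, rfl⟩; exact hM f f.2⟩
    have hle : ∀ f ∈ E, ∀ x : X, |f x| ≤ g x := fun f hf x =>
      le_ciSup (bdd x) (⟨f, hf⟩ : E)
    have gUC : UniformContinuous g := by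
      rcases E.eq_empty_or_nonempty with h | ⟨f0, hf0⟩
      · have : g = fun _ => 0 := by
          funext x
          haveI : IsEmpty ↥E := by rw [h]; exact Set.isEmpty_coe_sort.mpr rfl
          exact Real.iSup_of_isEmpty _
        rw [this]; exact uniformContinuous_const
      · haveI : Nonempty ↥E := ⟨⟨f0, hf0⟩⟩
        rw [UniformContinuous, Metric.uniformity_basis_dist.tendsto_right_iff]
        intro ε hε
        obtain ⟨V, hVmem, hV⟩ := hE.2.2 (ε / 2) (by positivity)
        have key : ∀ x y : X, (x, y) ∈ V → g x ≤ g y + ε / 2 := by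
          intro x y hxy
          refine ciSup_le fun f => ?_
          have h1 : |(f : X → ℝ) x| - |(f : X → ℝ) y| ≤ ε / 2 :=
            le_of_lt (lt_of_le_of_lt (abs_sub_abs_le_abs_sub _ _)
              (hV f f.2 (x, y) hxy))
          have h2 := hle f f.2 y
          linarith
        filter_upwards [symmetrize_mem_uniformity hVmem] with z hz
        have h1 := key z.1 z.2 hz.1
        have h2 := key z.2 z.1 hz.2
        rw [Real.dist_eq]
        rw [abs_lt]
        constructor <;> linarith
    refine ⟨⟨fun n => ⟨U n, hUmem n⟩, ⟨g, gUC⟩⟩, fun f hf => ?_⟩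
    exact ⟨hE.1 f hf, fun x => hle f hf x,
      fun n z hz => (hUprop n f hf z hz).le⟩
end

section
/- Let X be a uniform space whose uniformity has a 𝔊-base (U_α)_{α∈ω^ω}, and for α ∈ ω^ω and k ∈ ω put U_{α|k} = ⋂ {U_β : β ∈ ω^ω, β(i) = α(i) for all i < k}. Let (F_n)_{n∈ω} and (E_n)_{n∈ω} be sequences of finite subsets of X such that for every entourage U of X there exists k ∈ ω with (F_n × E_n) ∩ U ≠ ∅ for every n ≥ k. Then for every α ∈ ω^ω there exists k ∈ ω such that (F_n × E_n) ∩ U_{α|k} ≠ ∅ for every n ≥ k. -/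
/-- Let `(U_α)_{α ∈ ω^ω}` be a `𝔊`-base of the uniformity of a uniform space `X` and let
`(F_n)`, `(E_n)` be sequences of finite subsets of `X` such that for every entourage `U`
there is `k` with `(F_n × E_n) ∩ U ≠ ∅` for all `n ≥ k`. Then for every `α ∈ ω^ω` there
is `k ∈ ω` such that `(F_n × E_n) ∩ U_{α|k} ≠ ∅` for every `n ≥ k`, where
`U_{α|k} = ⋂ {U_β : β|k = α|k}`. -/
theorem exists_k_meets_restricted_entourage
    {X : Type*} [UniformSpace X]
    (U : (ℕ → ℕ) → Set (X × X))
    (hmem : ∀ α, U α ∈ uniformity X)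
    (hbase : ∀ V ∈ uniformity X, ∃ α, U α ⊆ V)
    (hmono : ∀ α β : ℕ → ℕ, α ≤ β → U β ⊆ U α)
    (F E : ℕ → Finset X)
    (hFE : ∀ V ∈ uniformity X, ∃ k : ℕ, ∀ n ≥ k, ∃ x ∈ F n, ∃ y ∈ E n, (x, y) ∈ V)
    (α : ℕ → ℕ) :
    ∃ k : ℕ, ∀ n ≥ k, ∃ x ∈ F n, ∃ y ∈ E n,
      (x, y) ∈ ⋂ β ∈ {β : ℕ → ℕ | ∀ i < k, β i = α i}, U β := by
  by_contra h
  push_neg at h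
  choose n hn hbad using h
  have hbad' : ∀ k : ℕ, ∀ x y : X, x ∈ F (n k) → y ∈ E (n k) →
      ∃ β : ℕ → ℕ, (∀ i < k, β i = α i) ∧ (x, y) ∉ U β := by
    intro k x y hx hy
    have := hbad k x hx y hy
    simp only [Set.mem_iInter, Set.mem_setOf_eq, not_forall] at this
    obtain ⟨β, hβ1, hβ2⟩ := this
    exact ⟨β, hβ1, hβ2⟩
  choose! B hBeq hBnot using hbad'
  set γ : ℕ → ℕ := fun i =>
    α i ⊔ (Finset.range (i + 1)).sup (fun k =>
      ((F (n k)) ×ˢ (E (n k))).sup (fun p => B k p.1 p.2 i)) with hγ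
  have hdom : ∀ k : ℕ, ∀ x y : X, x ∈ F (n k) → y ∈ E (n k) → B k x y ≤ γ := by
    intro k x y hx hy i
    by_cases hik : i < k
    · have : B k x y i = α i := hBeq k x y hx hy i hik
      rw [this]
      exact le_sup_left
    · push_neg at hik
      have hk : k ∈ Finset.range (i + 1) := Finset.mem_range.mpr (Nat.lt_succ_of_le hik)
      have hp : (x, y) ∈ (F (n k)) ×ˢ (E (n k)) := Finset.mk_mem_product hx hy
      calc B k x y i ≤ ((F (n k)) ×ˢ (E (n k))).sup (fun p => B k p.1 p.2 i) :=
            Finset.le_sup (f := fun p => B k p.1 p.2 i) hp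
        _ ≤ (Finset.range (i + 1)).sup (fun k =>
              ((F (n k)) ×ˢ (E (n k))).sup (fun p => B k p.1 p.2 i)) :=
            Finset.le_sup (f := fun k => ((F (n k)) ×ˢ (E (n k))).sup (fun p => B k p.1 p.2 i)) hk
        _ ≤ γ i := le_sup_right
  obtain ⟨m, hm⟩ := hFE (U γ) (hmem γ)
  obtain ⟨x, hx, y, hy, hxy⟩ := hm (n m) (hn m)
  exact hBnot m x y hx hy (hmono _ _ (hdom m x y hx hy) hxy)
end

section
/- Let X be a uniform space whose uniformity has a 𝔊-base (U_α)_{α∈ω^ω}, and for α ∈ ω^ω and k ∈ ω put U_{α|k} = ⋂ {U_β : β ∈ ω^ω, β(i) = α(i) for all i < k}. If the topological space X (with the topology induced by the uniformity) is strongly open-Reznichenko at a point x ∈ X, then for every α ∈ ω^ω there exists k ∈ ω such that the closure of the set U_{α|k}[x] = {y ∈ X : (x,y) ∈ U_{α|k}} is a neighborhood of x. -/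
/-- A topological space `X` is strongly open-Reznichenko at a point `x` if for every
decreasing sequence `(V_n)` of open sets with `x ∈ ⋂_n cl(V_n)` there is a sequence
`(F_n)` of finite sets `F_n ⊆ V_n` such that every neighborhood of `x` meets all but
finitely many of the sets `F_n`. -/
def StrongOpenReznichenkoAt (X : Type*) [TopologicalSpace X] (x : X) : Prop :=
  ∀ V : ℕ → Set X, (∀ n, IsOpen (V n)) → (∀ n, V (n + 1) ⊆ V n) →
    (∀ n, x ∈ closure (V n)) →
    ∃ F : ℕ → Finset X, (∀ n, ↑(F n) ⊆ V n) ∧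
      ∀ O ∈ nhds x, ∃ k : ℕ, ∀ n ≥ k, ∃ y ∈ F n, y ∈ O

/-- Let `(U_α)_{α ∈ ω^ω}` be a `𝔊`-base of the uniformity of a uniform space `X`. If `X`
is strongly open-Reznichenko at a point `x`, then for every `α ∈ ω^ω` there is `k ∈ ω`
such that the closure of the ball `U_{α|k}[x]` is a neighborhood of `x`, where
`U_{α|k} = ⋂ {U_β : β|k = α|k}`. -/
theorem closure_restricted_ball_mem_nhds
    {X : Type*} [UniformSpace X]
    (U : (ℕ → ℕ) → Set (X × X))
    (hmem : ∀ α, U α ∈ uniformity X)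
    (hbase : ∀ V ∈ uniformity X, ∃ α, U α ⊆ V)
    (hmono : ∀ α β : ℕ → ℕ, α ≤ β → U β ⊆ U α)
    (x : X) (hx : StrongOpenReznichenkoAt X x)
    (α : ℕ → ℕ) :
    ∃ k : ℕ,
      closure {y : X | (x, y) ∈ ⋂ β ∈ {β : ℕ → ℕ | ∀ i < k, β i = α i}, U β} ∈ nhds x := by
  by_contra hcon
  push_neg at hcon
  set B : ℕ → Set X :=
    fun k => {y : X | (x, y) ∈ ⋂ β ∈ {β : ℕ → ℕ | ∀ i < k, β i = α i}, U β} with hB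
  have hBmono : ∀ k, B k ⊆ B (k + 1) := by
    intro k y hy
    simp only [hB, Set.mem_setOf_eq, Set.mem_iInter] at hy ⊢
    intro β hβ
    exact hy β (fun i hi => hβ i (Nat.lt_succ_of_lt hi))
  set W : ℕ → Set X := fun k => (closure (B k))ᶜ with hW
  have hWopen : ∀ k, IsOpen (W k) := fun k => isClosed_closure.isOpen_compl
  have hWmono : ∀ k, W (k + 1) ⊆ W k := fun k =>
    Set.compl_subset_compl.2 (closure_mono (hBmono k))
  have hxW : ∀ k, x ∈ closure (W k) := by
    intro k
    rw [hW, closure_compl]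
    intro hx'
    exact hcon k (mem_interior_iff_mem_nhds.mp hx')
  obtain ⟨F, hF, hFnhds⟩ := hx W hWopen hWmono hxW
  have hsel : ∀ n : ℕ, ∀ y ∈ F n, ∃ β : ℕ → ℕ,
      (∀ i < n, β i = α i) ∧ (x, y) ∉ U β := by
    intro n y hy
    have hyW : y ∈ W n := hF n hy
    have hyB : y ∉ B n := fun h => hyW (subset_closure h)
    simp only [hB, Set.mem_setOf_eq, Set.mem_iInter, not_forall] at hyB
    obtain ⟨β, hβ1, hβ2⟩ := hyB
    exact ⟨β, hβ1, hβ2⟩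
  choose! β hβ1 hβ2 using hsel
  set γ : ℕ → ℕ := fun i =>
    max (α i) ((Finset.range (i + 1)).sup fun n => (F n).sup fun y => β n y i) with hγ
  have hle : ∀ n : ℕ, ∀ y ∈ F n, β n y ≤ γ := by
    intro n y hy i
    by_cases hin : i < n
    · rw [hβ1 n y hy i hin]
      exact le_max_left _ _
    · have hni : n ∈ Finset.range (i + 1) := Finset.mem_range.mpr (by omega)
      calc β n y i ≤ (F n).sup fun y => β n y i := Finset.le_sup (f := fun y => β n y i) hy
        _ ≤ (Finset.range (i + 1)).sup fun n => (F n).sup fun y => β n y i :=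
            Finset.le_sup (f := fun n => (F n).sup fun y => β n y i) hni
        _ ≤ γ i := le_max_right _ _
  have hball : {y : X | (x, y) ∈ U γ} ∈ nhds x := UniformSpace.ball_mem_nhds x (hmem γ)
  obtain ⟨k, hk⟩ := hFnhds _ hball
  obtain ⟨y, hyF, hyU⟩ := hk k le_rfl
  exact hβ2 k y hyF (hmono _ _ (hle k y hyF) hyU)
end

section
/- If a topological space X is σ-bounded, then the set C(X) of continuous real-valued functions on X is ω^ω-dominated in ℝ^X. -/
/-- If a topological space `X` is σ-bounded (a countable union of sets on which every
continuous real function is bounded), then the set `C(X)` of continuous real functions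
is `ω^ω`-dominated in `ℝ^X`. -/
theorem continuous_dominated_of_sigmaBounded
    {X : Type*} [TopologicalSpace X]
    (h : ∃ B : ℕ → Set X,
      (∀ n, ∀ f : X → ℝ, Continuous f → Bornology.IsBounded (f '' B n)) ∧
      (⋃ n, B n) = Set.univ) :
    ∃ φ : (ℕ → ℕ) → (X → ℝ), Monotone φ ∧
      ∀ f : X → ℝ, Continuous f → ∃ α : ℕ → ℕ, f ≤ φ α := by
  obtain ⟨B, hb, hcov⟩ := h
  have hx : ∀ x : X, ∃ n, x ∈ B n := fun x =>
    Set.mem_iUnion.mp (hcov ▸ Set.mem_univ x)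
  set ν : X → ℕ := fun x => sInf {n | x ∈ B n} with hν
  have hνmem : ∀ x, x ∈ B (ν x) := fun x => Nat.sInf_mem (hx x)
  refine ⟨fun α x => (α (ν x) : ℝ), ?_, ?_⟩
  · intro α β hab x
    simpa using (Nat.cast_le (α := ℝ)).mpr (hab (ν x))
  · intro f hf
    have : ∀ n, ∃ m : ℕ, ∀ x ∈ B n, f x ≤ m := by
      intro n
      obtain ⟨M, hM⟩ := (hb n f hf).bddAbove
      refine ⟨⌈M⌉₊, fun x hxB => ?_⟩
      exact le_trans (hM ⟨x, hxB, rfl⟩) (Nat.le_ceil M)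
    choose α hα using this
    exact ⟨α, fun x => hα (ν x) x (hνmem x)⟩
end

section
/- If X is a metrizable σ-compact topological space, then the poset C(X) of continuous real-valued functions on X (with the pointwise order) is ω^ω-dominated: there exists a monotone cofinal map from ω^ω to C(X), i.e., a family (f_α)_{α∈ω^ω} of continuous functions with f_α ≤ f_β for α ≤ β such that every f ∈ C(X) satisfies f ≤ f_α for some α ∈ ω^ω. -/
open Metric ENNReal Set

/-- If `X` is a metrizable σ-compact topological space, then the poset `C(X)` of
continuous real functions on `X` (pointwise order) is `ω^ω`-dominated: there is a
monotone cofinal map from `ω^ω` to `C(X)`. -/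
theorem continuous_dominated_of_metrizable_sigmaCompact
    {X : Type*} [TopologicalSpace X] [TopologicalSpace.MetrizableSpace X]
    [SigmaCompactSpace X] :
    ∃ φ : (ℕ → ℕ) → (X → ℝ), (∀ α, Continuous (φ α)) ∧ Monotone φ ∧
      ∀ f : X → ℝ, Continuous f → ∃ α : ℕ → ℕ, f ≤ φ α := by
  rcases isEmpty_or_nonempty X with hX | hX
  · exact ⟨fun _ _ => 0, fun _ => continuous_const, fun a b _ => le_rfl,
      fun f _ => ⟨fun _ => 0, fun x => (hX.false x).elim⟩⟩
  letI : MetricSpace X := TopologicalSpace.metrizableSpaceMetric X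
  obtain ⟨x₀⟩ := hX
  -- a covering family of nonempty compact sets
  set K : ℕ → Set X := fun n => compactCovering X n ∪ {x₀} with hKdef
  have hKc : ∀ n, IsCompact (K n) :=
    fun n => (isCompact_compactCovering X n).union isCompact_singleton
  have hKne : ∀ n, (K n).Nonempty := fun n => ⟨x₀, Or.inr rfl⟩
  have hKcov : ∀ x : X, ∃ n, x ∈ K n := by
    intro x
    obtain ⟨n, hn⟩ := exists_mem_compactCovering x
    exact ⟨n, Or.inl hn⟩
  -- parameters extracted from α
  set Mc : (ℕ → ℕ) → ℕ → ℝ≥0∞ := fun α n => ((n + α (2 * n) : ℕ) : ℝ≥0∞) with hMc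
  set ε : (ℕ → ℕ) → ℕ → ℝ := fun α n => 1 / ((α (2 * n + 1) : ℝ) + 1) with hε
  have hεpos : ∀ α n, 0 < ε α n := by
    intro α n
    have : (0:ℝ) < (α (2 * n + 1) : ℝ) + 1 := by positivity
    exact one_div_pos.2 this
  set T : (ℕ → ℕ) → ℕ → X → ℝ≥0∞ :=
    fun α n x => Mc α n + (ENNReal.ofReal (ε α n - infDist x (K n)))⁻¹ with hT
  set F : (ℕ → ℕ) → X → ℝ≥0∞ := fun α x => ⨅ n, T α n x with hF
  have hTcont : ∀ α n, Continuous (T α n) := by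
    intro α n
    exact continuous_const.add
      ((continuous_inv.comp (ENNReal.continuous_ofReal.comp
        (continuous_const.sub (continuous_infDist_pt (K n))))))
  have hTgen : ∀ (α : ℕ → ℕ) (n : ℕ) (x : X), (n : ℝ≥0∞) ≤ T α n x := by
    intro α n x
    refine le_trans ?_ le_self_add
    rw [hMc]
    exact_mod_cast Nat.cast_le.2 (Nat.le_add_right n _)
  have hTfin : ∀ α n x, x ∈ K n → T α n x ≠ ⊤ := by
    intro α n x hx
    rw [hT]
    simp only [infDist_zero_of_mem hx, sub_zero]
    refine ENNReal.add_ne_top.2 ⟨?_, ?_⟩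
    · exact natCast_ne_top _
    · rw [ENNReal.inv_ne_top]
      exact (ENNReal.ofReal_pos.2 (hεpos α n)).ne'
  have hFle : ∀ α x n, F α x ≤ T α n x := fun α x n => iInf_le _ n
  have hFfin : ∀ α x, F α x ≠ ⊤ := by
    intro α x
    obtain ⟨n, hn⟩ := hKcov x
    exact ne_top_of_le_ne_top (hTfin α n x hn) (hFle α x n)
  -- partial minima
  have hA : ∀ α (N : ℕ), ∃ A : X → ℝ≥0∞, Continuous A ∧
      (∀ y, ∀ m ≤ N, A y ≤ T α m y) ∧ (∀ y, F α y ≤ A y) := by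
    intro α N
    induction N with
    | zero =>
      refine ⟨T α 0, hTcont α 0, ?_, fun y => hFle α y 0⟩
      intro y m hm
      interval_cases m
      exact le_rfl
    | succ N ih =>
      obtain ⟨A, hAc, hAle, hFA⟩ := ih
      refine ⟨fun y => min (A y) (T α (N + 1) y), hAc.min (hTcont α (N + 1)), ?_, ?_⟩
      · intro y m hm
        by_cases h : m ≤ N
        · exact le_trans (min_le_left _ _) (hAle y m h)
        · have hm' : m = N + 1 := by omega
          subst hm'; exact min_le_right _ _
      · exact fun y => le_min (hFA y) (hFle α y (N + 1))
  refine ⟨fun α x => (F α x).toReal, ?_, ?_, ?_⟩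
  · -- continuity
    intro α
    rw [continuous_iff_continuousAt]
    intro x
    obtain ⟨n₀, hn₀⟩ := hKcov x
    obtain ⟨v, hvlt⟩ := ENNReal.exists_nat_gt (hTfin α n₀ x hn₀)
    obtain ⟨A, hAc, hAle, hFA⟩ := hA α v
    have hn₀v : n₀ ≤ v := by
      have : (n₀ : ℝ≥0∞) < (v : ℝ≥0∞) := lt_of_le_of_lt (hTgen α n₀ x) hvlt
      exact_mod_cast this.le
    have hxU : A x < (v : ℝ≥0∞) := lt_of_le_of_lt (hAle x n₀ hn₀v) hvlt
    have hEq : ∀ y, A y < (v : ℝ≥0∞) → F α y = A y := by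
      intro y hy
      refine le_antisymm (hFA y) (le_iInf fun n => ?_)
      rcases le_or_gt n v with h | h
      · exact hAle y n h
      · refine le_trans hy.le (le_trans ?_ (hTgen α n y))
        exact_mod_cast Nat.cast_le.2 h.le
    have hUopen : IsOpen {y : X | A y < (v : ℝ≥0∞)} :=
      isOpen_lt hAc continuous_const
    have hev : (fun y => (A y).toReal) =ᶠ[nhds x] fun y => (F α y).toReal := by
      filter_upwards [hUopen.mem_nhds hxU] with y hy
      rw [hEq y hy]
    have hAx : A x ≠ ⊤ := (lt_of_lt_of_le hxU le_top).ne
    exact ContinuousAt.congr ((ENNReal.tendsto_toReal hAx).comp hAc.continuousAt) hev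
  · -- monotone
    intro α β hab x
    have hTm : ∀ n, T α n x ≤ T β n x := by
      intro n
      refine add_le_add ?_ ?_
      · rw [hMc]
        exact_mod_cast Nat.cast_le.2 (Nat.add_le_add_left (hab (2 * n)) n)
      · rw [ENNReal.inv_le_inv]
        refine ENNReal.ofReal_le_ofReal (sub_le_sub_right ?_ _)
        rw [hε]
        refine one_div_le_one_div_of_le (by positivity) ?_
        exact add_le_add (Nat.cast_le.2 (hab (2 * n + 1))) le_rfl
    exact ENNReal.toReal_mono (hFfin β x) (le_iInf fun n => le_trans (hFle α x n) (hTm n))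
  · -- cofinal
    intro f hf
    have H : ∀ n : ℕ, ∃ m k : ℕ,
        ∀ y : X, infDist y (K n) < 1 / ((k : ℝ) + 1) → f y ≤ ((n + m : ℕ) : ℝ) := by
      intro n
      obtain ⟨z, hz, hmax⟩ := (hKc n).exists_isMaxOn (hKne n) hf.continuousOn
      have hUopen : IsOpen (f ⁻¹' Iio (f z + 1)) := isOpen_Iio.preimage hf
      have hsub : K n ⊆ f ⁻¹' Iio (f z + 1) := fun y hy =>
        Set.mem_preimage.2 (Set.mem_Iio.2 (lt_of_le_of_lt (hmax hy) (lt_add_one _)))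
      obtain ⟨δ, hδ, hth⟩ := (hKc n).exists_thickening_subset_open hUopen hsub
      refine ⟨⌈f z + 1⌉₊, ⌈1 / δ⌉₊, ?_⟩
      intro y hy
      have hδ' : 1 / ((⌈1 / δ⌉₊ : ℝ) + 1) ≤ δ := by
        rw [div_le_iff₀ (by positivity)]
        have h1 : 1 / δ ≤ (⌈1 / δ⌉₊ : ℝ) + 1 := le_trans (Nat.le_ceil _) (by linarith)
        calc (1:ℝ) = δ * (1/δ) := by field_simp
        _ ≤ δ * ((⌈1 / δ⌉₊ : ℝ) + 1) := mul_le_mul_of_nonneg_left h1 hδ.le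
      have hyth : y ∈ thickening δ (K n) :=
        (mem_thickening_iff_infDist_lt (hKne n)).2 (lt_of_lt_of_le hy hδ')
      have hlt : f y < f z + 1 := hth hyth
      have hceil : f z + 1 ≤ (⌈f z + 1⌉₊ : ℝ) := Nat.le_ceil _
      push_cast
      linarith
    choose m k hmk using H
    set α : ℕ → ℕ := fun j => if j % 2 = 0 then m (j / 2) else k (j / 2) with hα
    have hα2n : ∀ n, α (2 * n) = m n := by
      intro n
      have h2 : 2 * n / 2 = n := by omega
      simp only [hα]; rw [if_pos (by omega), h2]
    have hα2n1 : ∀ n, α (2 * n + 1) = k n := by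
      intro n
      have h2 : (2 * n + 1) / 2 = n := by omega
      simp only [hα]; rw [if_neg (by omega), h2]
    refine ⟨α, fun x => ?_⟩
    have hofle : ENNReal.ofReal (f x) ≤ F α x := by
      refine le_iInf fun n => ?_
      rcases lt_or_ge (infDist x (K n)) (ε α n) with h | h
      · have hfx : f x ≤ ((n + α (2 * n) : ℕ) : ℝ) := by
          rw [hα2n]
          exact hmk n x (by simp only [hε] at h; rwa [hα2n1] at h)
        refine le_trans (ENNReal.ofReal_le_ofReal hfx) ?_
        rw [ENNReal.ofReal_natCast]
        exact le_self_add
      · have : ENNReal.ofReal (ε α n - infDist x (K n)) = 0 :=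
          ENNReal.ofReal_eq_zero.2 (by linarith)
        rw [hT]
        simp only [this, ENNReal.inv_zero, add_top]
        exact le_top
    have h1 : (ENNReal.ofReal (f x)).toReal ≤ (F α x).toReal :=
      ENNReal.toReal_mono (hFfin α x) hofle
    rcases le_or_gt 0 (f x) with h0 | h0
    · rwa [ENNReal.toReal_ofReal h0] at h1
    · exact le_trans h0.le ENNReal.toReal_nonneg
end

section
/- Let X ⊆ {0,1}^{ω₁} be the set of all functions x : ω₁ → {0,1} with finite support x^{-1}(1), endowed with the topology induced by the uniformity generated by the base {U_α : α < ω₁}, where U_α = {(x,y) ∈ X×X : x(γ) = y(γ) for all γ < α}. Then X has countable extent (every closed discrete subset of X is countable) and X is not separable (no countable subset of X is dense). -/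
/-- The first uncountable ordinal `ω₁`. -/
noncomputable def omega1Ord : Ordinal := (Cardinal.aleph 1).ord

/-- The ordinals below `ω₁`. -/
abbrev Idx : Type 1 := {o : Ordinal // o < omega1Ord}

/-- The σ-product of `ω₁` doubletons: all functions `x : ω₁ → {0,1}` with finite
support `x⁻¹(1)`. -/
def SigmaProd : Type 1 := {x : Idx → Bool // {γ : Idx | x γ = true}.Finite}

/-- The `U_α`-ball around `x`: all `y` agreeing with `x` at every coordinate `γ < α`. -/
def sigmaBall (x : SigmaProd) (α : Idx) : Set SigmaProd :=
  {y : SigmaProd | ∀ γ : Idx, γ < α → y.1 γ = x.1 γ}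

/-- The topology on the σ-product induced by the uniformity generated by the
base `{U_α : α < ω₁}`, `U_α = {(x,y) : x(γ) = y(γ) for all γ < α}`: its open sets are
the sets `W` such that every `x ∈ W` contains some ball `U_α[x]` inside `W`;
equivalently, the topology generated by all the balls `U_α[x]`. -/
instance : TopologicalSpace SigmaProd :=
  TopologicalSpace.generateFrom {S : Set SigmaProd | ∃ x α, S = sigmaBall x α}

lemma omega1_isLimit : Order.IsSuccLimit omega1Ord := Cardinal.isSuccLimit_ord (Cardinal.aleph0_le_aleph 1)

def idx0 : Idx := ⟨0, omega1_isLimit.pos⟩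

noncomputable def idxSucc (α : Idx) : Idx := ⟨Order.succ α.1, omega1_isLimit.succ_lt α.2⟩

lemma lt_idxSucc (α : Idx) : α < idxSucc α := by
  show α.1 < Order.succ α.1
  exact Order.lt_succ α.1

def zeroP : SigmaProd := ⟨fun _ => false, by simp⟩

lemma mem_ball_self (x : SigmaProd) (α : Idx) : x ∈ sigmaBall x α := fun _ _ => rfl

lemma ball_mono {α α' : Idx} (h : α ≤ α') (x : SigmaProd) :
    sigmaBall x α' ⊆ sigmaBall x α := fun y hy γ hγ => hy γ (lt_of_lt_of_le hγ h)

lemma isOpen_ball (x : SigmaProd) (α : Idx) : IsOpen (sigmaBall x α) :=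
  TopologicalSpace.GenerateOpen.basic _ ⟨x, α, rfl⟩

lemma exists_ball_subset' {W : Set SigmaProd}
    (hW : TopologicalSpace.GenerateOpen {S : Set SigmaProd | ∃ x α, S = sigmaBall x α} W) :
    ∀ x ∈ W, ∃ α, sigmaBall x α ⊆ W := by
  induction hW with
  | basic S hS =>
    obtain ⟨z, α, rfl⟩ := hS
    exact fun x hx => ⟨α, fun y hy γ hγ => (hy γ hγ).trans (hx γ hγ)⟩
  | univ => exact fun x _ => ⟨idx0, Set.subset_univ _⟩
  | inter S T hS hT ihS ihT =>
    intro x hx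
    obtain ⟨α, hα⟩ := ihS x hx.1
    obtain ⟨β, hβ⟩ := ihT x hx.2
    exact ⟨max α β, Set.subset_inter ((ball_mono (le_max_left _ _) x).trans hα)
      ((ball_mono (le_max_right _ _) x).trans hβ)⟩
  | sUnion 𝒮 h ih =>
    intro x hx
    obtain ⟨S, hS, hxS⟩ := hx
    obtain ⟨α, hα⟩ := ih S hS x hxS
    exact ⟨α, hα.trans (Set.subset_sUnion_of_mem hS)⟩

lemma exists_ball_subset {W : Set SigmaProd} (hW : IsOpen W) {x : SigmaProd} (hx : x ∈ W) :
    ∃ α, sigmaBall x α ⊆ W :=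
  exists_ball_subset' hW x hx

lemma countable_Iio (α : Idx) : {γ : Idx | γ < α}.Countable := by
  have h0 : (Set.Iio α.1).Countable := by
    rw [Cardinal.countable_iff_lt_aleph_one, Ordinal.mk_Iio_ordinal, Cardinal.lift_lt_aleph_one]
    exact Cardinal.lt_ord.mp α.2
  apply Set.countable_of_injective_of_countable_image (f := fun γ : Idx => γ.1)
  · exact fun a _ b _ h => Subtype.ext h
  · refine h0.mono ?_
    rintro _ ⟨γ, hγ, rfl⟩
    exact hγ

lemma not_countable_univ_Idx : ¬ (Set.univ : Set Idx).Countable := by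
  intro h
  rw [Cardinal.countable_iff_lt_aleph_one, Cardinal.mk_univ] at h
  have he : Cardinal.mk Idx = Cardinal.lift.{1,0} (Cardinal.aleph 1) := by
    have h1 : Cardinal.mk Idx = Cardinal.mk (Set.Iio omega1Ord) := rfl
    rw [h1, Ordinal.mk_Iio_ordinal, omega1Ord, Cardinal.card_ord]
  rw [he, Cardinal.lift_lt_aleph_one] at h
  exact lt_irrefl _ h

lemma acc_of_uncountable (n : ℕ) :
    ∀ D : Set SigmaProd, (∀ d ∈ D, {γ : Idx | d.1 γ = true}.ncard ≤ n) → ¬ D.Countable →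
    ∃ x : SigmaProd, ∀ α : Idx, ∃ d ∈ D, d ≠ x ∧ d ∈ sigmaBall x α := by
  induction n with
  | zero =>
    intro D hcard hD
    exfalso
    apply hD
    refine (Set.countable_singleton zeroP).mono ?_
    intro d hd
    have h0 : {γ : Idx | d.1 γ = true} = ∅ :=
      (Set.ncard_eq_zero d.2).mp (Nat.le_zero.mp (hcard d hd))
    have : d = zeroP := by
      apply Subtype.ext; funext γ
      have hγ : γ ∉ ({γ : Idx | d.1 γ = true}) := by rw [h0]; exact Set.notMem_empty γ
      cases h : d.1 γ with
      | false => rfl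
      | true => exact absurd h hγ
    simp [this]
  | succ n ih =>
    intro D hcard hD
    by_cases hB : ∀ α : Idx, ∃ d ∈ D, d ≠ zeroP ∧ ∀ γ : Idx, γ < α → d.1 γ = false
    · refine ⟨zeroP, fun α => ?_⟩
      obtain ⟨d, hdD, hdne, hd⟩ := hB α
      exact ⟨d, hdD, hdne, fun γ hγ => hd γ hγ⟩
    · push_neg at hB
      obtain ⟨α₀, hα₀⟩ := hB
      set D' := D \ {zeroP} with hD'def
      have hD' : ¬ D'.Countable := by
        intro h
        exact hD ((h.insert zeroP).mono
          (by rw [Set.insert_diff_singleton]; exact Set.subset_insert _ _))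
      have cover : D' ⊆ ⋃ β ∈ {γ : Idx | γ < α₀}, {d ∈ D' | d.1 β = true} := by
        intro d hd
        obtain ⟨γ, hγ, hdγ⟩ := hα₀ d hd.1 hd.2
        have hdt : d.1 γ = true := by
          cases h : d.1 γ with
          | false => exact absurd h hdγ
          | true => rfl
        exact Set.mem_biUnion hγ ⟨hd, hdt⟩
      have hfib : ∃ β, β < α₀ ∧ ¬ {d ∈ D' | d.1 β = true}.Countable := by
        by_contra h
        push_neg at h
        exact hD' (((countable_Iio α₀).biUnion (fun β hβ => h β hβ)).mono cover)
      obtain ⟨β, hβα₀, hE⟩ := hfib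
      set E := {d ∈ D' | d.1 β = true} with hEdef
      let r : SigmaProd → SigmaProd := fun d =>
        ⟨fun γ => if γ = β then false else d.1 γ, d.2.subset (by
          intro γ hγ
          by_cases hb : γ = β
          · simp [hb] at hγ
          · simpa [hb] using hγ)⟩
      have hinj : Set.InjOn r E := by
        intro d hd d' hd' h
        apply Subtype.ext; funext γ
        by_cases hb : γ = β
        · rw [hb, hd.2, hd'.2]
        · have := congrArg (fun z : SigmaProd => z.1 γ) h
          simpa [r, hb] using this
      have hF : ¬ (r '' E).Countable := fun h =>
        hE (Set.countable_of_injective_of_countable_image hinj h)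
      have hFcard : ∀ f ∈ r '' E, {γ : Idx | f.1 γ = true}.ncard ≤ n := by
        rintro f ⟨d, hd, rfl⟩
        have hsub : {γ : Idx | (r d).1 γ = true} ⊆ {γ : Idx | d.1 γ = true} \ {β} := by
          intro γ hγ
          by_cases hb : γ = β
          · exact absurd hγ (by simp [r, hb])
          · have : d.1 γ = true := by simpa [r, hb] using hγ
            exact ⟨this, hb⟩
        have h1 : {γ : Idx | (r d).1 γ = true}.ncard ≤ ({γ : Idx | d.1 γ = true} \ {β}).ncard :=
          Set.ncard_le_ncard hsub d.2.diff
        have h2 : ({γ : Idx | d.1 γ = true} \ {β}).ncard < {γ : Idx | d.1 γ = true}.ncard :=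
          Set.ncard_diff_singleton_lt_of_mem hd.2 d.2
        have h3 := hcard d hd.1.1
        omega
      obtain ⟨x, hx⟩ := ih (r '' E) hFcard hF
      have hx'fin : {γ : Idx | (fun γ => if γ = β then true else x.1 γ) γ = true}.Finite := by
        refine (x.2.union (Set.finite_singleton β)).subset ?_
        intro γ hγ
        by_cases hb : γ = β
        · exact Or.inr hb
        · exact Or.inl (by simpa [hb] using hγ)
      set x' : SigmaProd := ⟨fun γ => if γ = β then true else x.1 γ, hx'fin⟩ with hx'def
      refine ⟨x', fun α => ?_⟩
      obtain ⟨f, hfF, hfne, hfball⟩ := hx (max α (idxSucc β))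
      obtain ⟨d, hdE, rfl⟩ := hfF
      refine ⟨d, hdE.1.1, ?_, ?_⟩
      · -- d ≠ x'
        have hex : ∃ γ, (r d).1 γ ≠ x.1 γ := by
          by_contra h
          push_neg at h
          exact hfne (Subtype.ext (funext h))
        obtain ⟨γ, hγ⟩ := hex
        have hγge : ¬ γ < max α (idxSucc β) := fun hlt => hγ (hfball γ hlt)
        have hγβ : γ ≠ β := by
          intro h
          rw [h] at hγge
          exact hγge (lt_of_lt_of_le (lt_idxSucc β) (le_max_right _ _))
        intro h
        apply hγ
        show (if γ = β then false else d.1 γ) = x.1 γ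
        rw [if_neg hγβ, h]
        show (if γ = β then true else x.1 γ) = x.1 γ
        rw [if_neg hγβ]
      · -- d ∈ sigmaBall x' α
        intro γ hγ
        by_cases hb : γ = β
        · show d.1 γ = x'.1 γ
          rw [hb, hdE.2]
          exact (if_pos rfl).symm
        · have hγ' : γ < max α (idxSucc β) := lt_of_lt_of_le hγ (le_max_left _ _)
          have hbf := hfball γ hγ'
          show d.1 γ = x'.1 γ
          have h1 : (r d).1 γ = d.1 γ := if_neg hb
          have h2 : x'.1 γ = x.1 γ := if_neg hb
          rw [h2, ← hbf, ← h1]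

/-- The σ-product of `ω₁` doubletons with the `ω`-box topology has countable extent
(each closed discrete subset is countable) but is not separable. -/
theorem sigmaProd_countable_extent_and_not_separable :
    (∀ D : Set SigmaProd, IsClosed D → DiscreteTopology ↥D → D.Countable) ∧
    ¬ ∃ C : Set SigmaProd, C.Countable ∧ Dense C := by
  constructor
  · -- countable extent
    intro D hclosed hdisc
    by_contra hD
    have hsplit : ∃ n : ℕ, ¬ {d ∈ D | {γ : Idx | d.1 γ = true}.ncard = n}.Countable := by
      by_contra h
      push_neg at h
      apply hD
      refine (Set.countable_iUnion h).mono ?_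
      intro d hd
      exact Set.mem_iUnion.mpr ⟨{γ : Idx | d.1 γ = true}.ncard, hd, rfl⟩
    obtain ⟨n, hn⟩ := hsplit
    obtain ⟨x, hx⟩ := acc_of_uncountable n _ (fun d hd => le_of_eq hd.2) hn
    by_cases hxD : x ∈ D
    · -- contradicts discreteness
      have hsing : IsOpen ({⟨x, hxD⟩} : Set ↥D) := isOpen_discrete _
      obtain ⟨U, hU, hUeq⟩ := isOpen_induced_iff.mp hsing
      have hxU : x ∈ U := by
        have : (⟨x, hxD⟩ : ↥D) ∈ Subtype.val ⁻¹' U := by rw [hUeq]; rfl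
        exact this
      obtain ⟨α, hα⟩ := exists_ball_subset hU hxU
      obtain ⟨d, hdD, hdne, hdball⟩ := hx α
      have hdU : d ∈ U := hα hdball
      have : (⟨d, hdD.1⟩ : ↥D) ∈ Subtype.val ⁻¹' U := hdU
      rw [hUeq] at this
      exact hdne (congrArg Subtype.val this)
    · -- contradicts closedness
      obtain ⟨α, hα⟩ := exists_ball_subset hclosed.isOpen_compl hxD
      obtain ⟨d, hdD, _, hdball⟩ := hx α
      exact hα hdball hdD.1
  · -- not separable
    rintro ⟨C, hCc, hCd⟩
    set S := ⋃ c ∈ C, {γ : Idx | c.1 γ = true} with hSdef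
    have hS : S.Countable := hCc.biUnion (fun c _ => c.2.countable)
    have hex : ∃ α : Idx, α ∉ S := by
      by_contra h
      push_neg at h
      exact not_countable_univ_Idx (hS.mono (fun γ _ => h γ))
    obtain ⟨α, hα⟩ := hex
    have hxfin : {γ : Idx | (fun γ => if γ = α then true else false) γ = true}.Finite := by
      refine (Set.finite_singleton α).subset ?_
      intro γ hγ
      by_cases hb : γ = α
      · exact hb
      · simp [hb] at hγ
    set x : SigmaProd := ⟨fun γ => if γ = α then true else false, hxfin⟩ with hxdef
    obtain ⟨c, hcC, hcball⟩ := hCd.exists_mem_open (isOpen_ball x (idxSucc α))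
      ⟨x, mem_ball_self x _⟩
    have hcα : c.1 α = true := by
      have := hcball α (lt_idxSucc α)
      rw [this]
      exact if_pos rfl
    exact hα (Set.mem_biUnion hcC hcα)
end
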